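/- arXiv:1404.7475 — 3 statements merged into one kernel-verified Lean document; each statement's English description precedes it below -/
import Mathlib

section
/- Let φ : R → S be a formally étale homomorphism of commutative k-algebras. Then every e-dimensional HS-derivation D : R → R⟦X_1,…,X_e⟧ on R over k extends uniquely to S: there is exactly one e-dimensional HS-derivation D' : S → S⟦X_1,…,X_e⟧ on S over k such that D' ∘ φ equals the composite of D with the map R⟦X_1,…,X_e⟧ → S⟦X_1,…,X_e⟧ applying φ to each coefficient. -/
open scoped TensorProduct

noncomputable section

/-- The total degree `|i| = i 1 + … + i e` of a multi-index. -/
def mdeg {e : ℕ} (i : Fin e →₀ ℕ) : ℕ := ∑ t, i t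

/-- An `e`-dimensional Hasse–Schmidt derivation on the commutative `k`-algebra `R`:
a `k`-algebra homomorphism `D : R → R⟦X₁,…,X_e⟧` whose composite with evaluation at
`X = 0` (the constant coefficient) is the identity of `R`. -/
structure HSDer (k R : Type*) [CommRing k] [CommRing R] [Algebra k R] (e : ℕ) where
  /-- the underlying `k`-algebra homomorphism `R → R⟦X₁,…,X_e⟧` -/
  toFun : R →ₐ[k] MvPowerSeries (Fin e) R
  constantCoeff_toFun : ∀ r : R, MvPowerSeries.constantCoeff (toFun r) = r

/-- The component `D_i : R → R` of an HS-derivation: `D(r) = ∑ᵢ Dᵢ(r) Xⁱ`. -/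
def HSDer.cmp {k R : Type*} [CommRing k] [CommRing R] [Algebra k R] {e : ℕ}
    (D : HSDer k R e) (i : Fin e →₀ ℕ) (r : R) : R :=
  MvPowerSeries.coeff i (D.toFun r)

/-- The structure constants of a formal group law: `fglC F i j l` is the coefficient of
`Xⁱ Yʲ` in the power series `F₁^{l 1} ⋯ F_e^{l e}`.  (The first `e` variables are the `X`'s,
the last `e` variables are the `Y`'s.) -/
def fglC {k : Type*} [CommRing k] {e : ℕ} (F : Fin e → MvPowerSeries (Fin e ⊕ Fin e) k)
    (i j l : Fin e →₀ ℕ) : k :=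
  MvPowerSeries.coeff (Finsupp.sumElim i j) (∏ t, F t ^ l t)

/-- An `e`-dimensional formal group law over `k`: an `e`-tuple `F = (F₁,…,F_e)` of power
series in `k⟦X₁,…,X_e,Y₁,…,Y_e⟧` with `F(X,0) = X`, `F(0,Y) = Y` and
`F(F(X,Y),Z) = F(X,F(Y,Z))`.  The unit axioms are stated coefficientwise, and the
associativity axiom is stated coefficientwise in terms of the structure constants `fglC`:
the coefficient of `Xᵃ Yᵇ Z^c` on either side of the associativity equation (the displayed
sums are finite on the nose; all further terms vanish since each `F_t` has zero constant
term). -/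
structure FormalGroupLaw (k : Type*) [CommRing k] (e : ℕ) where
  /-- the components `F_t ∈ k⟦X₁,…,X_e,Y₁,…,Y_e⟧` -/
  F : Fin e → MvPowerSeries (Fin e ⊕ Fin e) k
  /-- `F(X, 0) = X` -/
  unit_right : ∀ (t : Fin e) (i : Fin e →₀ ℕ),
    MvPowerSeries.coeff (Finsupp.sumElim i 0) (F t)
      = if i = Finsupp.single t 1 then 1 else 0
  /-- `F(0, Y) = Y` -/
  unit_left : ∀ (t : Fin e) (j : Fin e →₀ ℕ),
    MvPowerSeries.coeff (Finsupp.sumElim 0 j) (F t)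
      = if j = Finsupp.single t 1 then 1 else 0
  /-- associativity `F(F(X,Y),Z) = F(X,F(Y,Z))`, coefficientwise at `Xᵃ Yᵇ Z^c` -/
  assoc : ∀ (t : Fin e) (a b c : Fin e →₀ ℕ),
    ∑ l ∈ Finset.Iic (Finsupp.equivFunOnFinite.symm fun _ => mdeg a + mdeg b),
        fglC F a b l * MvPowerSeries.coeff (Finsupp.sumElim l c) (F t)
      = ∑ l ∈ Finset.Iic (Finsupp.equivFunOnFinite.symm fun _ => mdeg b + mdeg c),
        fglC F b c l * MvPowerSeries.coeff (Finsupp.sumElim a l) (F t)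

/-- `D` is an `F`-derivation for the formal group law `W`: the `F`-iterativity rule
`D_j ∘ D_i = ∑_l c_{i,j}^l D_l` holds, where `c_{i,j}^l = fglC W.F i j l` (the sum is over
all `l` with every entry at most `|i| + |j|`; this includes all `l` with `|l| ≤ |i| + |j|`,
and the structure constants vanish for `|l| > |i| + |j|`). -/
def IsFDer {k R : Type*} [CommRing k] [CommRing R] [Algebra k R] {e : ℕ}
    (W : FormalGroupLaw k e) (D : HSDer k R e) : Prop :=
  ∀ (i j : Fin e →₀ ℕ) (x : R),
    D.cmp j (D.cmp i x)
      = ∑ l ∈ Finset.Iic (Finsupp.equivFunOnFinite.symm fun _ => mdeg i + mdeg j),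
          fglC W.F i j l • D.cmp l x

/-- `(K, D)` is strict: the ring of constants `⋂_{|i| = 1} ker Dᵢ` coincides with
`K^p = {x^p : x ∈ K}`. -/
def IsStrictF {k K : Type*} [CommRing k] [CommRing K] [Algebra k K] {e : ℕ} (p : ℕ)
    (D : HSDer k K e) : Prop :=
  ∀ x : K, (∀ i : Fin e →₀ ℕ, mdeg i = 1 → D.cmp i x = 0) ↔ ∃ y : K, y ^ p = x

universe u

section Aux

variable {e : ℕ} {S : Type*} [CommRing S]

lemma mdeg_add (a b : Fin e →₀ ℕ) : mdeg (a + b) = mdeg a + mdeg b := by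
  simp [mdeg, Finsupp.add_apply, Finset.sum_add_distrib]

lemma mdeg_eq_zero {i : Fin e →₀ ℕ} (h : mdeg i = 0) : i = 0 := by
  ext t
  have := Finset.sum_eq_zero_iff.mp h t (Finset.mem_univ t)
  simpa using this

/-- The ideal of power series vanishing in total degrees `< n`. -/
def Jd (e : ℕ) (S : Type*) [CommRing S] (n : ℕ) : Ideal (MvPowerSeries (Fin e) S) where
  carrier := {f | ∀ i : Fin e →₀ ℕ, mdeg i < n → MvPowerSeries.coeff i f = 0}
  add_mem' := fun hf hg i hi => by simp [map_add, hf i hi, hg i hi]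
  zero_mem' := fun i _ => by simp
  smul_mem' := fun c f hf => by
    intro i hi
    rw [smul_eq_mul, MvPowerSeries.coeff_mul]
    apply Finset.sum_eq_zero
    intro p hp
    rw [Finset.HasAntidiagonal.mem_antidiagonal] at hp
    have h2 : mdeg p.2 < n := by
      have := mdeg_add p.1 p.2
      rw [hp] at this
      omega
    rw [hf p.2 h2, mul_zero]

lemma mem_Jd {n : ℕ} {f : MvPowerSeries (Fin e) S} :
    f ∈ Jd e S n ↔ ∀ i : Fin e →₀ ℕ, mdeg i < n → MvPowerSeries.coeff i f = 0 :=
  Iff.rfl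

lemma Jd_antitone {m n : ℕ} (h : m ≤ n) : Jd e S n ≤ Jd e S m :=
  fun _ hf i hi => hf i (lt_of_lt_of_le hi h)

lemma Jd_zero_eq_top : Jd e S 0 = ⊤ := by
  rw [eq_top_iff]
  exact fun f _ i hi => absurd hi (by omega)

lemma Jd_mul_le (m n : ℕ) : Jd e S m * Jd e S n ≤ Jd e S (m + n) := by
  rw [Ideal.mul_le]
  intro f hf g hg i hi
  rw [MvPowerSeries.coeff_mul]
  apply Finset.sum_eq_zero
  intro p hp
  rw [Finset.HasAntidiagonal.mem_antidiagonal] at hp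
  have hadd := mdeg_add p.1 p.2
  rw [hp] at hadd
  by_cases h1 : mdeg p.1 < m
  · rw [hf p.1 h1, zero_mul]
  · rw [hg p.2 (by omega), mul_zero]

lemma Jd_pow_le (n : ℕ) : (Jd e S 1) ^ n ≤ Jd e S n := by
  induction n with
  | zero => rw [pow_zero, Ideal.one_eq_top, Jd_zero_eq_top]
  | succ n ih =>
      calc (Jd e S 1) ^ (n + 1) = (Jd e S 1) ^ n * Jd e S 1 := pow_succ _ _
        _ ≤ Jd e S n * Jd e S 1 := Ideal.mul_mono_left ih
        _ ≤ Jd e S (n + 1) := Jd_mul_le n 1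

lemma coeff_eq_of_sub_mem_Jd {n : ℕ} {f g : MvPowerSeries (Fin e) S}
    (h : f - g ∈ Jd e S n) {i : Fin e →₀ ℕ} (hi : mdeg i < n) :
    MvPowerSeries.coeff i f = MvPowerSeries.coeff i g := by
  have := h i hi
  rw [map_sub, sub_eq_zero] at this
  exact this

lemma mem_Jd_one_iff {f : MvPowerSeries (Fin e) S} :
    f ∈ Jd e S 1 ↔ MvPowerSeries.constantCoeff f = 0 := by
  constructor
  · intro h
    rw [← MvPowerSeries.coeff_zero_eq_constantCoeff_apply]
    exact h 0 (by simp [mdeg])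
  · intro h i hi
    have : i = 0 := mdeg_eq_zero (by omega)
    rw [this, MvPowerSeries.coeff_zero_eq_constantCoeff_apply, h]

lemma coeff_eq_of_mk_eq_mk {n : ℕ} {f g : MvPowerSeries (Fin e) S}
    (h : Ideal.Quotient.mk (Jd e S n) f = Ideal.Quotient.mk (Jd e S n) g)
    {i : Fin e →₀ ℕ} (hi : mdeg i < n) :
    MvPowerSeries.coeff i f = MvPowerSeries.coeff i g :=
  coeff_eq_of_sub_mem_Jd (Ideal.Quotient.eq.mp h) hi

end Aux

set_option maxHeartbeats 1600000 in
/-- If `R → S` is formally étale, every `e`-dimensional HS-derivation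
`D : R → R⟦X₁,…,X_e⟧` on `R` over `k` extends uniquely to `S`. -/
theorem hsder_extends_uniquely_of_formallyEtale
    (p : ℕ) [Fact p.Prime] (e : ℕ) (he : 0 < e)
    (k : Type u) [Field k] [CharP k p] [ExpChar k p] [PerfectRing k p]
    (R S : Type u) [CommRing R] [CommRing S] [Algebra k R] [Algebra k S]
    [Algebra R S] [IsScalarTower k R S] [Algebra.FormallyEtale R S]
    (D : HSDer k R e) :
    ∃! D' : HSDer k S e,
      ∀ r : R, D'.toFun (algebraMap R S r)
        = MvPowerSeries.map (algebraMap R S) (D.toFun r) := by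
  classical
  letI : Algebra R (MvPowerSeries (Fin e) S) :=
    ((MvPowerSeries.map (algebraMap R S)).comp
      (D.toFun : R →+* MvPowerSeries (Fin e) R)).toAlgebra
  have hψ : ∀ r : R, algebraMap R (MvPowerSeries (Fin e) S) r
      = MvPowerSeries.map (algebraMap R S) (D.toFun r) := fun _ => rfl
  -- nilpotency of the image ideals
  have hnil : ∀ n : ℕ,
      IsNilpotent ((Jd e S 1).map (Ideal.Quotient.mk (Jd e S n))) := by
    intro n
    refine ⟨n, ?_⟩
    rw [← Ideal.map_pow]
    have hle : Ideal.map (Ideal.Quotient.mk (Jd e S n)) ((Jd e S 1) ^ n) ≤ ⊥ :=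
      (Ideal.map_quotient_self (Jd e S n)) ▸ Ideal.map_mono (Jd_pow_le n)
    exact le_bot_iff.mp hle
  -- the structure map differs from constants by Jd 1
  have hC : ∀ r : R,
      MvPowerSeries.C (algebraMap R S r)
        - algebraMap R (MvPowerSeries (Fin e) S) r ∈ Jd e S 1 := by
    intro r
    rw [mem_Jd_one_iff, map_sub, MvPowerSeries.constantCoeff_C, hψ,
      MvPowerSeries.constantCoeff_map, D.constantCoeff_toFun, sub_self]
  -- base maps to the quotients
  let g : ∀ n : ℕ, S →ₐ[R] ((MvPowerSeries (Fin e) S ⧸ Jd e S n) ⧸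
      (Jd e S 1).map (Ideal.Quotient.mk (Jd e S n))) := fun n =>
    { toRingHom := (Ideal.Quotient.mk _).comp
        ((Ideal.Quotient.mk (Jd e S n)).comp
          (MvPowerSeries.C : S →+* MvPowerSeries (Fin e) S))
      commutes' := by
        intro r
        show Ideal.Quotient.mk _ (Ideal.Quotient.mk _
          (MvPowerSeries.C (algebraMap R S r))) = _
        have h0 : algebraMap R ((MvPowerSeries (Fin e) S ⧸ Jd e S n) ⧸
            (Jd e S 1).map (Ideal.Quotient.mk (Jd e S n))) r
            = Ideal.Quotient.mk _ (Ideal.Quotient.mk (Jd e S n)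
                (algebraMap R (MvPowerSeries (Fin e) S) r)) := rfl
        rw [h0, Ideal.Quotient.eq, ← map_sub]
        exact Ideal.mem_map_of_mem _ (hC r) }
  -- the lifted maps
  let f : ∀ n : ℕ, S →ₐ[R] (MvPowerSeries (Fin e) S ⧸ Jd e S n) := fun n =>
    Algebra.FormallySmooth.lift _ (hnil n) (g n)
  have hf : ∀ (n : ℕ) (s : S),
      Ideal.Quotient.mk ((Jd e S 1).map (Ideal.Quotient.mk (Jd e S n))) (f n s)
        = g n s := fun n s => Algebra.FormallySmooth.mk_lift _ (hnil n) (g n) s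
  -- representatives
  let F : ℕ → S → MvPowerSeries (Fin e) S := fun n s =>
    (Ideal.Quotient.mk_surjective (f n s)).choose
  have hF : ∀ (n : ℕ) (s : S), Ideal.Quotient.mk (Jd e S n) (F n s) = f n s :=
    fun n s => (Ideal.Quotient.mk_surjective (f n s)).choose_spec
  -- representatives agree with constants modulo Jd 1 ⊔ Jd n
  have hFC : ∀ (n : ℕ) (s : S),
      F n s - MvPowerSeries.C s ∈ Jd e S 1 ⊔ Jd e S n := by
    intro n s
    have h1 : Ideal.Quotient.mk ((Jd e S 1).map (Ideal.Quotient.mk (Jd e S n)))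
        (Ideal.Quotient.mk (Jd e S n) (F n s))
        = Ideal.Quotient.mk _ (Ideal.Quotient.mk (Jd e S n)
            (MvPowerSeries.C s)) := by
      rw [hF]; exact hf n s
    rw [Ideal.Quotient.eq, ← map_sub] at h1
    have h2 := Ideal.comap_map_of_surjective (Ideal.Quotient.mk (Jd e S n))
      Ideal.Quotient.mk_surjective (Jd e S 1)
    have h3 : F n s - MvPowerSeries.C s ∈
        Ideal.comap (Ideal.Quotient.mk (Jd e S n))
          ((Jd e S 1).map (Ideal.Quotient.mk (Jd e S n))) := h1
    rw [h2] at h3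
    rwa [← RingHom.ker_eq_comap_bot, Ideal.mk_ker] at h3
  -- coherence of the lifts
  have hqf : ∀ (m n : ℕ), m ≤ n → ∀ s : S,
      Ideal.Quotient.mk (Jd e S m) (F n s) = f m s := by
    intro m n hmn s
    let q : (MvPowerSeries (Fin e) S ⧸ Jd e S n) →ₐ[R]
        (MvPowerSeries (Fin e) S ⧸ Jd e S m) :=
      { toRingHom := Ideal.Quotient.factor (Jd_antitone hmn)
        commutes' := fun r => Ideal.Quotient.factor_mk (Jd_antitone hmn) _ }
    have key : q.comp (f n) = f m := by
      apply Algebra.FormallyUnramified.ext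
        ((Jd e S 1).map (Ideal.Quotient.mk (Jd e S m))) (hnil m)
      intro s
      have hL : q (f n s) = Ideal.Quotient.mk (Jd e S m) (F n s) := by
        rw [← hF n s]
        exact Ideal.Quotient.factor_mk (Jd_antitone hmn) _
      show Ideal.Quotient.mk _ (q (f n s)) = _
      rw [hL, hf m s]
      show _ = Ideal.Quotient.mk _ (Ideal.Quotient.mk (Jd e S m)
        (MvPowerSeries.C s))
      rw [Ideal.Quotient.eq, ← map_sub]
      obtain ⟨y, hy, z, hz, hyz⟩ := Submodule.mem_sup.mp (hFC n s)
      rw [← hyz, map_add, Ideal.Quotient.eq_zero_iff_mem.mpr (Jd_antitone hmn hz),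
        add_zero]
      exact Ideal.mem_map_of_mem _ hy
    have := AlgHom.congr_fun key s
    rw [← this]
    show Ideal.Quotient.mk (Jd e S m) (F n s) = q (f n s)
    rw [← hF n s]
    exact (Ideal.Quotient.factor_mk (Jd_antitone hmn) _).symm
  -- coherence of coefficients
  have hcoeff : ∀ (s : S) (i : Fin e →₀ ℕ) (m n : ℕ), mdeg i < m → mdeg i < n →
      MvPowerSeries.coeff i (F m s) = MvPowerSeries.coeff i (F n s) := by
    intro s i m n hm hn
    have e1 : MvPowerSeries.coeff i (F m s)
        = MvPowerSeries.coeff i (F (mdeg i + 1) s) := by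
      apply coeff_eq_of_mk_eq_mk (n := mdeg i + 1) _ (by omega)
      rw [hqf (mdeg i + 1) m (by omega) s, hqf (mdeg i + 1) (mdeg i + 1) le_rfl s]
    have e2 : MvPowerSeries.coeff i (F n s)
        = MvPowerSeries.coeff i (F (mdeg i + 1) s) := by
      apply coeff_eq_of_mk_eq_mk (n := mdeg i + 1) _ (by omega)
      rw [hqf (mdeg i + 1) n (by omega) s, hqf (mdeg i + 1) (mdeg i + 1) le_rfl s]
    rw [e1, e2]
  -- the candidate function
  let Dfun : S → MvPowerSeries (Fin e) S := fun s i =>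
    MvPowerSeries.coeff i (F (mdeg i + 1) s)
  have hDcoeff : ∀ (s : S) (i : Fin e →₀ ℕ) (n : ℕ), mdeg i < n →
      MvPowerSeries.coeff i (Dfun s) = MvPowerSeries.coeff i (F n s) := by
    intro s i n hn
    show MvPowerSeries.coeff i (F (mdeg i + 1) s) = _
    exact hcoeff s i (mdeg i + 1) n (by omega) hn
  -- ring hom structure
  let DR : S →ₐ[R] MvPowerSeries (Fin e) S :=
    { toFun := Dfun
      map_one' := by
        show Dfun 1 = 1
        apply MvPowerSeries.ext
        intro i
        rw [hDcoeff 1 i (mdeg i + 1) (by omega)]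
        exact coeff_eq_of_mk_eq_mk (by rw [hF, map_one, map_one]) (by omega)
      map_mul' := by
        intro s t
        show Dfun (s * t) = Dfun s * Dfun t
        apply MvPowerSeries.ext
        intro i
        rw [hDcoeff (s * t) i (mdeg i + 1) (by omega)]
        have h1 : MvPowerSeries.coeff i (F (mdeg i + 1) (s * t))
            = MvPowerSeries.coeff i (F (mdeg i + 1) s * F (mdeg i + 1) t) := by
          apply coeff_eq_of_mk_eq_mk (n := mdeg i + 1) _ (by omega)
          rw [hF, map_mul, map_mul, hF, hF]
        rw [h1, MvPowerSeries.coeff_mul, MvPowerSeries.coeff_mul]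
        apply Finset.sum_congr rfl
        intro q hq
        rw [Finset.HasAntidiagonal.mem_antidiagonal] at hq
        have hd := mdeg_add q.1 q.2
        rw [hq] at hd
        rw [hDcoeff s q.1 (mdeg i + 1) (by omega), hDcoeff t q.2 (mdeg i + 1) (by omega)]
      map_zero' := by
        show Dfun 0 = 0
        apply MvPowerSeries.ext
        intro i
        rw [hDcoeff 0 i (mdeg i + 1) (by omega)]
        exact coeff_eq_of_mk_eq_mk (by rw [hF, map_zero, map_zero]) (by omega)
      map_add' := by
        intro s t
        show Dfun (s + t) = Dfun s + Dfun t
        apply MvPowerSeries.ext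
        intro i
        have h1 : MvPowerSeries.coeff i (F (mdeg i + 1) (s + t))
            = MvPowerSeries.coeff i (F (mdeg i + 1) s + F (mdeg i + 1) t) :=
          coeff_eq_of_mk_eq_mk (by rw [hF, map_add, map_add, hF, hF]) (by omega)
        rw [hDcoeff (s + t) i (mdeg i + 1) (by omega), h1, map_add, map_add,
          hDcoeff s i (mdeg i + 1) (by omega), hDcoeff t i (mdeg i + 1) (by omega)]
      commutes' := by
        intro r
        show Dfun (algebraMap R S r) = algebraMap R (MvPowerSeries (Fin e) S) r
        apply MvPowerSeries.ext
        intro i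
        rw [hDcoeff (algebraMap R S r) i (mdeg i + 1) (by omega)]
        apply coeff_eq_of_mk_eq_mk (n := mdeg i + 1) _ (by omega)
        rw [hF]
        exact (f (mdeg i + 1)).commutes r }
  -- the constant coefficient is the identity
  have hconst : ∀ s : S, MvPowerSeries.constantCoeff (Dfun s) = s := by
    intro s
    have h0 : MvPowerSeries.coeff 0 (Dfun s) = MvPowerSeries.coeff 0 (F 1 s) :=
      hDcoeff s 0 1 (by simp [mdeg])
    have h1 : F 1 s - MvPowerSeries.C s ∈ Jd e S 1 := by
      have h2 := hFC 1 s
      rwa [sup_idem] at h2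
    have h2 := coeff_eq_of_sub_mem_Jd h1 (i := 0) (by simp [mdeg])
    rw [← MvPowerSeries.coeff_zero_eq_constantCoeff_apply, h0, h2,
      MvPowerSeries.coeff_zero_eq_constantCoeff_apply, MvPowerSeries.constantCoeff_C]
  -- the k-algebra structure
  let Dk : S →ₐ[k] MvPowerSeries (Fin e) S :=
    { toRingHom := DR.toRingHom
      commutes' := by
        intro c
        show DR (algebraMap k S c) = algebraMap k (MvPowerSeries (Fin e) S) c
        rw [IsScalarTower.algebraMap_apply k R S c, DR.commutes, hψ, AlgHom.commutes,
          MvPowerSeries.algebraMap_apply, MvPowerSeries.map_C,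
          MvPowerSeries.algebraMap_apply, ← IsScalarTower.algebraMap_apply k R S c] }
  refine ⟨⟨Dk, hconst⟩, ?_, ?_⟩
  · intro r
    exact DR.commutes r
  · rintro ⟨T, hT⟩ h''
    let E : S →ₐ[R] MvPowerSeries (Fin e) S :=
      { toRingHom := T.toRingHom
        commutes' := fun r => h'' r }
    have hE : ∀ (n : ℕ) (s : S), Ideal.Quotient.mk (Jd e S n) (T s)
        = Ideal.Quotient.mk (Jd e S n) (Dfun s) := by
      intro n s
      have key : (Ideal.Quotient.mkₐ R (Jd e S n)).comp E
          = (Ideal.Quotient.mkₐ R (Jd e S n)).comp DR := by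
        apply Algebra.FormallyUnramified.ext
          ((Jd e S 1).map (Ideal.Quotient.mk (Jd e S n))) (hnil n)
        intro x
        show Ideal.Quotient.mk _ (Ideal.Quotient.mk (Jd e S n) (T x))
          = Ideal.Quotient.mk _ (Ideal.Quotient.mk (Jd e S n) (Dfun x))
        rw [Ideal.Quotient.eq, ← map_sub]
        apply Ideal.mem_map_of_mem
        rw [mem_Jd_one_iff, map_sub, hT x, hconst x, sub_self]
      exact AlgHom.congr_fun key s
    have hTD : T = Dk := by
      ext s i
      exact coeff_eq_of_mk_eq_mk (hE (mdeg i + 1) s) (by omega)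
    subst hTD
    rfl
end
end

section
/- Let φ : R → S be a formally étale homomorphism of commutative k-algebras and let D be an F-derivation on R. Then the unique e-dimensional HS-derivation D' on S extending D (i.e. with D' ∘ φ equal to the composite of D with the coefficientwise map R⟦X⟧ → S⟦X⟧ induced by φ) is again an F-derivation. -/
open scoped TensorProduct

noncomputable section

set_option linter.unusedSectionVars false
set_option synthInstance.maxHeartbeats 1000000
set_option maxHeartbeats 1000000
namespace FDerAux

open MvPowerSeries

variable {ι : Type*} [Fintype ι]

def tdeg (d : ι →₀ ℕ) : ℕ := ∑ t, d t

lemma tdeg_add (a b : ι →₀ ℕ) : tdeg (a + b) = tdeg a + tdeg b := by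
  simp [tdeg, Finset.sum_add_distrib]

lemma tdeg_mono {a b : ι →₀ ℕ} (h : a ≤ b) : tdeg a ≤ tdeg b :=
  Finset.sum_le_sum fun t _ => Finsupp.le_def.mp h t

lemma apply_le_tdeg (d : ι →₀ ℕ) (t : ι) : d t ≤ tdeg d :=
  Finset.single_le_sum (fun _ _ => Nat.zero_le _) (Finset.mem_univ t)

lemma tdeg_eq_zero {d : ι →₀ ℕ} (h : tdeg d = 0) : d = 0 := by
  ext t
  have := apply_le_tdeg d t
  simp only [Finsupp.coe_zero, Pi.zero_apply]
  omega

def cbound (N : ℕ) : ι →₀ ℕ := Finsupp.equivFunOnFinite.symm fun _ => N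

lemma cbound_apply (N : ℕ) (t : ι) : cbound N t = N := rfl

lemma le_cbound {N : ℕ} {d : ι →₀ ℕ} (h : tdeg d ≤ N) : d ≤ cbound N :=
  Finsupp.le_def.mpr fun t => le_trans (apply_le_tdeg d t) h

lemma lt_tdeg_of_not_le_cbound {M : ℕ} {d : ι →₀ ℕ} (h : ¬ d ≤ cbound M) : M < tdeg d := by
  by_contra h'
  exact h (le_cbound (by omega))

variable {S : Type*} [CommRing S]

lemma coeff_mul_vanish {f g : MvPowerSeries ι S} {a b : ℕ}
    (hf : ∀ d, tdeg d < a → coeff d f = 0)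
    (hg : ∀ d, tdeg d < b → coeff d g = 0) :
    ∀ d, tdeg d < a + b → coeff d (f * g) = 0 := by
  classical
  intro d hd
  rw [MvPowerSeries.coeff_mul]
  refine Finset.sum_eq_zero fun p hp => ?_
  rw [Finset.HasAntidiagonal.mem_antidiagonal] at hp
  have hsum : tdeg p.1 + tdeg p.2 = tdeg d := by rw [← tdeg_add, hp]
  by_cases h1 : tdeg p.1 < a
  · rw [hf _ h1, zero_mul]
  · have : tdeg p.2 < b := by omega
    rw [hg _ this, mul_zero]

lemma coeff_pow_vanish {f : MvPowerSeries ι S}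
    (hf : MvPowerSeries.constantCoeff f = 0) (n : ℕ) :
    ∀ d, tdeg d < n → coeff d (f ^ n) = 0 := by
  have hf1 : ∀ d, tdeg d < 1 → coeff d f = 0 := by
    intro d hd
    have hd0 : d = 0 := tdeg_eq_zero (by omega)
    subst hd0
    rw [MvPowerSeries.coeff_zero_eq_constantCoeff, hf]
  induction n with
  | zero => intro d hd; omega
  | succ n ih =>
    intro d hd
    rw [pow_succ]
    exact coeff_mul_vanish ih hf1 d (by omega)

lemma coeff_prod_vanish {e' : ℕ} (f : Fin e' → MvPowerSeries ι S)
    (hf : ∀ t, MvPowerSeries.constantCoeff (f t) = 0) (l : Fin e' →₀ ℕ)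
    {d : ι →₀ ℕ} (hd : tdeg d < tdeg l) :
    coeff d (∏ t, f t ^ l t) = 0 := by
  classical
  have key : ∀ s : Finset (Fin e'), ∀ d : ι →₀ ℕ, tdeg d < ∑ t ∈ s, l t →
      coeff d (∏ t ∈ s, f t ^ l t) = 0 := by
    intro s
    induction s using Finset.cons_induction with
    | empty => intro d hd; simp at hd
    | cons a s ha ih =>
      intro d hd
      rw [Finset.prod_cons]
      rw [Finset.sum_cons] at hd
      exact coeff_mul_vanish (coeff_pow_vanish (hf a) (l a)) ih d hd
  exact key Finset.univ d hd

/-- The ideal of polynomials all of whose coefficients in total degree `< N` vanish. -/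
def lowIdeal (N : ℕ) : Ideal (MvPolynomial ι S) where
  carrier := {p | ∀ d, tdeg d < N → MvPolynomial.coeff d p = 0}
  zero_mem' := by intro d _; simp
  add_mem' := by
    intro p q hp hq d hd
    rw [MvPolynomial.coeff_add, hp d hd, hq d hd, add_zero]
  smul_mem' := by
    classical
    intro c p hp d hd
    rw [smul_eq_mul, MvPolynomial.coeff_mul]
    refine Finset.sum_eq_zero fun q hq => ?_
    rw [Finset.HasAntidiagonal.mem_antidiagonal] at hq
    have h2 : tdeg q.2 ≤ tdeg d := tdeg_mono (by rw [← hq]; exact le_add_self)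
    rw [hp q.2 (lt_of_le_of_lt h2 hd), mul_zero]

lemma mem_lowIdeal_one {p : MvPolynomial ι S}
    (hp : MvPolynomial.constantCoeff p = 0) : p ∈ (lowIdeal 1 : Ideal (MvPolynomial ι S)) := by
  intro d hd
  have hd0 : d = 0 := tdeg_eq_zero (by omega)
  subst hd0
  exact hp

lemma lowIdeal_mul_le (a b : ℕ) :
    (lowIdeal a : Ideal (MvPolynomial ι S)) * lowIdeal b ≤ lowIdeal (a + b) := by
  classical
  rw [Ideal.mul_le]
  intro p hp q hq d hd
  rw [MvPolynomial.coeff_mul]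
  refine Finset.sum_eq_zero fun r hr => ?_
  rw [Finset.HasAntidiagonal.mem_antidiagonal] at hr
  have hsum : tdeg r.1 + tdeg r.2 = tdeg d := by rw [← tdeg_add, hr]
  by_cases h1 : tdeg r.1 < a
  · rw [hp r.1 h1, zero_mul]
  · have : tdeg r.2 < b := by omega
    rw [hq r.2 this, mul_zero]

lemma ker_constantCoeff_pow_le (N : ℕ) :
    (RingHom.ker (MvPolynomial.constantCoeff : MvPolynomial ι S →+* S)) ^ N
      ≤ lowIdeal N := by
  induction N with
  | zero => intro p _ d hd; omega
  | succ n ih =>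
    calc (RingHom.ker (MvPolynomial.constantCoeff : MvPolynomial ι S →+* S)) ^ (n+1)
        = (RingHom.ker (MvPolynomial.constantCoeff : MvPolynomial ι S →+* S)) ^ n
          * RingHom.ker (MvPolynomial.constantCoeff : MvPolynomial ι S →+* S) := pow_succ _ _
      _ ≤ lowIdeal n * lowIdeal 1 :=
          Ideal.mul_mono ih (fun p hp => mem_lowIdeal_one hp)
      _ ≤ lowIdeal (n + 1) := lowIdeal_mul_le n 1

lemma prod_pow_mem_pow {B : Type*} [CommRing B] (I : Ideal B) (b : ι → B)
    (hb : ∀ t, b t ∈ I) (d : ι →₀ ℕ) :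
    (∏ t, b t ^ d t) ∈ I ^ (tdeg d) := by
  classical
  have key : ∀ s : Finset ι, (∏ t ∈ s, b t ^ d t) ∈ I ^ (∑ t ∈ s, d t) := by
    intro s
    induction s using Finset.cons_induction with
    | empty => simp [Ideal.one_eq_top]
    | cons a s ha ih =>
      rw [Finset.prod_cons, Finset.sum_cons, pow_add]
      exact Ideal.mul_mem_mul (Ideal.pow_mem_pow (hb a) _) ih
  exact key Finset.univ

section Trunc

variable {ι : Type*} [Fintype ι] [DecidableEq ι] {S : Type*} [CommRing S]

/-- Truncation of a multivariate power series to exponents `≤ w`. -/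
def truncFun (w : ι →₀ ℕ) (f : MvPowerSeries ι S) : MvPolynomial ι S :=
  ∑ d ∈ Finset.Iic w, MvPolynomial.monomial d (MvPowerSeries.coeff d f)

lemma coeff_truncFun (w : ι →₀ ℕ) (f : MvPowerSeries ι S) (d : ι →₀ ℕ) :
    MvPolynomial.coeff d (truncFun w f)
      = if d ≤ w then MvPowerSeries.coeff d f else 0 := by
  classical
  rw [truncFun, MvPolynomial.coeff_sum]
  simp only [MvPolynomial.coeff_monomial]
  rw [Finset.sum_ite_eq' (Finset.Iic w) d (fun d' => MvPowerSeries.coeff d' f)]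
  simp [Finset.mem_Iic]

lemma truncFun_one (w : ι →₀ ℕ) : truncFun w (1 : MvPowerSeries ι S) = 1 := by
  classical
  apply MvPolynomial.ext
  intro d
  rw [coeff_truncFun]
  by_cases h : d = 0
  · subst h
    have hw : (0 : ι →₀ ℕ) ≤ w := zero_le
    rw [if_pos hw]
    simp [MvPowerSeries.coeff_zero_eq_constantCoeff]
  · rw [MvPowerSeries.coeff_one, MvPolynomial.coeff_one]
    simp [Ne.symm h, h]

lemma truncFun_add (w : ι →₀ ℕ) (f g : MvPowerSeries ι S) :
    truncFun w (f + g) = truncFun w f + truncFun w g := by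
  classical
  apply MvPolynomial.ext
  intro d
  rw [MvPolynomial.coeff_add, coeff_truncFun, coeff_truncFun, coeff_truncFun, map_add]
  split <;> simp

lemma truncFun_C (w : ι →₀ ℕ) (s : S) :
    truncFun w (MvPowerSeries.C s) = MvPolynomial.C s := by
  classical
  apply MvPolynomial.ext
  intro d
  rw [coeff_truncFun]
  by_cases h : d = 0
  · subst h
    have hw : (0 : ι →₀ ℕ) ≤ w := zero_le
    rw [if_pos hw]
    simp [MvPowerSeries.coeff_zero_eq_constantCoeff]
  · rw [MvPowerSeries.coeff_C, MvPolynomial.coeff_C]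
    simp [Ne.symm h, h]

variable {B' : Type*} [CommRing B']

lemma eval₂_eq_zero_of_low {N : ℕ} (φ : S →+* B') (b : ι → B')
    (hb : ∀ d : ι →₀ ℕ, N + 1 ≤ tdeg d → ∏ t, b t ^ d t = 0)
    {p : MvPolynomial ι S} (hp : ∀ d, tdeg d < N + 1 → MvPolynomial.coeff d p = 0) :
    MvPolynomial.eval₂ φ b p = 0 := by
  rw [MvPolynomial.eval₂_eq']
  refine Finset.sum_eq_zero fun d hd => ?_
  by_cases h : tdeg d < N + 1
  · rw [MvPolynomial.mem_support_iff] at hd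
    exact absurd (hp d h) hd
  · rw [hb d (by omega), mul_zero]

lemma coeff_truncFun_mul_low {N : ℕ} (f g : MvPowerSeries ι S) :
    ∀ d, tdeg d < N + 1 →
      MvPolynomial.coeff d
        (truncFun (cbound (N+1)) (f * g)
          - truncFun (cbound (N+1)) f * truncFun (cbound (N+1)) g) = 0 := by
  classical
  intro d hd
  have hdw : d ≤ cbound (N + 1) := le_cbound (by omega)
  rw [MvPolynomial.coeff_sub, coeff_truncFun, if_pos hdw, sub_eq_zero,
    MvPowerSeries.coeff_mul, MvPolynomial.coeff_mul]
  refine Finset.sum_congr rfl fun q hq => ?_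
  rw [Finset.HasAntidiagonal.mem_antidiagonal] at hq
  have h1 : q.1 ≤ d := by rw [← hq]; exact le_self_add
  have h2 : q.2 ≤ d := by rw [← hq]; exact le_add_self
  rw [coeff_truncFun, coeff_truncFun, if_pos (le_trans h1 hdw), if_pos (le_trans h2 hdw)]

/-- Evaluation of a multivariate power series, truncated in total degree `≤ N`, at a
family of elements whose monomials of total degree `> N` vanish, as a ring hom. -/
def PSEval (N : ℕ) (φ : S →+* B') (b : ι → B')
    (hb : ∀ d : ι →₀ ℕ, N + 1 ≤ tdeg d → ∏ t, b t ^ d t = 0) :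
    MvPowerSeries ι S →+* B' where
  toFun f := MvPolynomial.eval₂ φ b (truncFun (cbound (N+1)) f)
  map_one' := by
    show MvPolynomial.eval₂ φ b (truncFun (cbound (N+1)) 1) = 1
    rw [truncFun_one, MvPolynomial.eval₂_one]
  map_zero' := by
    show MvPolynomial.eval₂ φ b (truncFun (cbound (N+1)) 0) = 0
    have h0 : truncFun (cbound (N+1) : ι →₀ ℕ) (0 : MvPowerSeries ι S) = 0 := by
      have := truncFun_add (cbound (N+1) : ι →₀ ℕ) (0 : MvPowerSeries ι S) 0
      simpa using this.symm
    rw [h0, MvPolynomial.eval₂_zero]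
  map_add' f g := by
    show MvPolynomial.eval₂ φ b (truncFun (cbound (N+1)) (f + g)) = _
    rw [truncFun_add, MvPolynomial.eval₂_add]
  map_mul' f g := by
    show MvPolynomial.eval₂ φ b (truncFun (cbound (N+1)) (f * g)) = _
    have key := eval₂_eq_zero_of_low (N := N) φ b hb (coeff_truncFun_mul_low (N := N) f g)
    rw [MvPolynomial.eval₂_sub, MvPolynomial.eval₂_mul, sub_eq_zero] at key
    exact key

lemma PSEval_apply (N : ℕ) (φ : S →+* B') (b : ι → B')
    (hb : ∀ d : ι →₀ ℕ, N + 1 ≤ tdeg d → ∏ t, b t ^ d t = 0) (f : MvPowerSeries ι S) :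
    PSEval N φ b hb f = MvPolynomial.eval₂ φ b (truncFun (cbound (N+1)) f) := rfl

end Trunc

section Quot

lemma mem_lowIdeal {ι : Type*} [Fintype ι] {S : Type*} [CommRing S] {N : ℕ}
    {p : MvPolynomial ι S} :
    p ∈ (lowIdeal N : Ideal (MvPolynomial ι S)) ↔
      ∀ d, tdeg d < N → MvPolynomial.coeff d p = 0 := Iff.rfl

variable (S : Type*) [CommRing S] (e N : ℕ)

/-- Quotient of the polynomial ring in `2e` variables by the ideal of polynomials
supported in total degree `> N`. -/
abbrev Bq :=
  MvPolynomial (Fin e ⊕ Fin e) S ⧸ (lowIdeal (N + 1) : Ideal (MvPolynomial (Fin e ⊕ Fin e) S))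

/-- The constant coefficient of the truncated polynomial ring. -/
def cB : Bq S e N →+* S :=
  Ideal.Quotient.lift _ (MvPolynomial.constantCoeff)
    (fun p hp => by
      rw [MvPolynomial.constantCoeff_eq]
      exact (mem_lowIdeal.mp hp) 0 (by simp [tdeg]))

lemma cB_mk (p : MvPolynomial (Fin e ⊕ Fin e) S) :
    cB S e N (Ideal.Quotient.mk _ p) = MvPolynomial.constantCoeff p :=
  Ideal.Quotient.lift_mk _ _ _

lemma ker_cB_pow : (RingHom.ker (cB S e N)) ^ (N + 1) = ⊥ := by
  have h1 : RingHom.ker (cB S e N) ≤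
      (RingHom.ker
          (MvPolynomial.constantCoeff : MvPolynomial (Fin e ⊕ Fin e) S →+* S)).map
        (Ideal.Quotient.mk (lowIdeal (N + 1))) := by
    intro x hx
    obtain ⟨p, rfl⟩ := Ideal.Quotient.mk_surjective x
    rw [RingHom.mem_ker, cB_mk] at hx
    exact Ideal.mem_map_of_mem _ hx
  refine le_bot_iff.mp ?_
  calc (RingHom.ker (cB S e N)) ^ (N + 1)
      ≤ ((RingHom.ker
            (MvPolynomial.constantCoeff : MvPolynomial (Fin e ⊕ Fin e) S →+* S)).map
          (Ideal.Quotient.mk (lowIdeal (N + 1)))) ^ (N + 1) := Ideal.pow_right_mono h1 _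
    _ = ((RingHom.ker
            (MvPolynomial.constantCoeff : MvPolynomial (Fin e ⊕ Fin e) S →+* S)
          ^ (N + 1))).map (Ideal.Quotient.mk (lowIdeal (N + 1))) := (Ideal.map_pow _ _ _).symm
    _ ≤ (lowIdeal (N + 1)).map (Ideal.Quotient.mk (lowIdeal (N + 1))) :=
        Ideal.map_mono (ker_constantCoeff_pow_le _)
    _ = ⊥ := Ideal.map_quotient_self _

lemma ker_cB_nilpotent : IsNilpotent (RingHom.ker (cB S e N)) :=
  ⟨N + 1, ker_cB_pow S e N⟩

/-- Products of powers of elements of the kernel of `cB` of total weight `> N` vanish. -/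
lemma prod_pow_eq_zero_of_ker {ι' : Type*} [Fintype ι'] (b : ι' → Bq S e N)
    (hb : ∀ t, cB S e N (b t) = 0) (d : ι' →₀ ℕ) (hd : N + 1 ≤ tdeg d) :
    ∏ t, b t ^ d t = 0 := by
  have h1 : (∏ t, b t ^ d t) ∈ (RingHom.ker (cB S e N)) ^ tdeg d :=
    prod_pow_mem_pow _ b (fun t => hb t) d
  have h2 : (RingHom.ker (cB S e N)) ^ tdeg d ≤ (RingHom.ker (cB S e N)) ^ (N + 1) :=
    Ideal.pow_le_pow_right hd
  have := h2 h1
  rwa [ker_cB_pow, Ideal.mem_bot] at this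

/-- Truncation of power series in `2e` variables, landing in the quotient ring. -/
def Tr : MvPowerSeries (Fin e ⊕ Fin e) S →+* Bq S e N :=
  PSEval N ((Ideal.Quotient.mk _).comp MvPolynomial.C)
    (fun v => Ideal.Quotient.mk _ (MvPolynomial.X v))
    (fun d hd => prod_pow_eq_zero_of_ker S e N _
      (fun v => by rw [cB_mk]; simp) d hd)

lemma Tr_eq_mk (f : MvPowerSeries (Fin e ⊕ Fin e) S) :
    Tr S e N f = Ideal.Quotient.mk _ (truncFun (cbound (N + 1)) f) := by
  have h := MvPolynomial.eval₂_comp_left (Ideal.Quotient.mk (lowIdeal (N + 1)))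
    MvPolynomial.C MvPolynomial.X (truncFun (cbound (N + 1)) f)
  rw [MvPolynomial.eval₂_eta] at h
  rw [Tr, PSEval_apply]
  exact h.symm

lemma cB_Tr (f : MvPowerSeries (Fin e ⊕ Fin e) S) :
    cB S e N (Tr S e N f) = MvPowerSeries.constantCoeff f := by
  rw [Tr_eq_mk, cB_mk, MvPolynomial.constantCoeff_eq, coeff_truncFun]
  have hw : (0 : (Fin e ⊕ Fin e) →₀ ℕ) ≤ cbound (N + 1) := zero_le
  rw [if_pos hw, MvPowerSeries.coeff_zero_eq_constantCoeff]

lemma Tr_congr {f g : MvPowerSeries (Fin e ⊕ Fin e) S}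
    (h : ∀ d, tdeg d < N + 1 → MvPowerSeries.coeff d f = MvPowerSeries.coeff d g) :
    Tr S e N f = Tr S e N g := by
  rw [Tr_eq_mk, Tr_eq_mk, Ideal.Quotient.eq]
  intro d hd
  rw [MvPolynomial.coeff_sub, coeff_truncFun, coeff_truncFun]
  split
  · rw [h d hd, sub_self]
  · rw [sub_self]

lemma Tr_coeff_eq {f g : MvPowerSeries (Fin e ⊕ Fin e) S} (h : Tr S e N f = Tr S e N g)
    {d : (Fin e ⊕ Fin e) →₀ ℕ} (hd : tdeg d < N + 1) :
    MvPowerSeries.coeff d f = MvPowerSeries.coeff d g := by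
  rw [Tr_eq_mk, Tr_eq_mk, Ideal.Quotient.eq] at h
  have := (mem_lowIdeal.mp h) d hd
  rw [MvPolynomial.coeff_sub, coeff_truncFun, coeff_truncFun,
    if_pos (le_cbound (show tdeg d ≤ N + 1 by omega)),
    if_pos (le_cbound (show tdeg d ≤ N + 1 by omega)), sub_eq_zero] at this
  exact this

end Quot

section SumElim

variable {e : ℕ}

lemma sumElim_zero_zero : (Finsupp.sumElim (0 : Fin e →₀ ℕ) (0 : Fin e →₀ ℕ)) = 0 := by
  ext v; cases v <;> simp

lemma tdeg_sumElim (a b : Fin e →₀ ℕ) :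
    tdeg (Finsupp.sumElim a b) = tdeg a + tdeg b := by
  rw [tdeg, Fintype.sum_sum_type]
  simp [tdeg]

lemma sumElim_le_sumElim_iff {a b a' b' : Fin e →₀ ℕ} :
    Finsupp.sumElim a b ≤ Finsupp.sumElim a' b' ↔ a ≤ a' ∧ b ≤ b' := by
  constructor
  · intro h
    exact ⟨Finsupp.le_def.mpr fun t => by simpa using Finsupp.le_def.mp h (Sum.inl t),
      Finsupp.le_def.mpr fun t => by simpa using Finsupp.le_def.mp h (Sum.inr t)⟩
  · rintro ⟨h1, h2⟩
    refine Finsupp.le_def.mpr fun v => ?_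
    cases v with
    | inl t => simpa using Finsupp.le_def.mp h1 t
    | inr t => simpa using Finsupp.le_def.mp h2 t

lemma sumElim_eq_iff {a b a' b' : Fin e →₀ ℕ} :
    Finsupp.sumElim a b = Finsupp.sumElim a' b' ↔ a = a' ∧ b = b' := by
  constructor
  · intro h
    constructor
    · ext t; have := congrArg (fun f => f (Sum.inl t)) h; simpa using this
    · ext t; have := congrArg (fun f => f (Sum.inr t)) h; simpa using this
  · rintro ⟨rfl, rfl⟩; rfl

lemma sumElim_sub (a b a' : Fin e →₀ ℕ) :
    Finsupp.sumElim a b - Finsupp.sumElim a' 0 = Finsupp.sumElim (a - a') b := by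
  ext v
  rw [Finsupp.tsub_apply]
  cases v with
  | inl t => simp [Finsupp.tsub_apply]
  | inr t => simp

lemma sumElim_decomp (d : (Fin e ⊕ Fin e) →₀ ℕ) :
    Finsupp.sumElim (Finsupp.equivFunOnFinite.symm fun t => d (Sum.inl t))
      (Finsupp.equivFunOnFinite.symm fun t => d (Sum.inr t)) = d := by
  ext v
  cases v with
  | inl t => simp [Finsupp.equivFunOnFinite]; rfl
  | inr t => simp [Finsupp.equivFunOnFinite]; rfl

variable {S : Type*} [CommRing S]

lemma prod_monomial_one {ι : Type*} (s : Finset (Fin e)) (m : Fin e → (ι →₀ ℕ)) :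
    (∏ t ∈ s, (MvPowerSeries.monomial (m t) (1 : S)))
      = MvPowerSeries.monomial (∑ t ∈ s, m t) 1 := by
  classical
  induction s using Finset.cons_induction with
  | empty => simp [MvPowerSeries.monomial_zero_one]
  | cons a s ha ih =>
    rw [Finset.prod_cons, Finset.sum_cons, ih, MvPowerSeries.monomial_mul_monomial, one_mul]

lemma prod_X_pow (κ : Fin e → (Fin e ⊕ Fin e)) (c : Fin e →₀ ℕ) :
    (∏ t, (MvPowerSeries.X (κ t) : MvPowerSeries (Fin e ⊕ Fin e) S) ^ c t)
      = MvPowerSeries.monomial (∑ t, Finsupp.single (κ t) (c t)) 1 := by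
  rw [← prod_monomial_one]
  refine Finset.prod_congr rfl fun t _ => ?_
  rw [MvPowerSeries.X_pow_eq]

lemma sum_single_inl (c : Fin e →₀ ℕ) :
    (∑ t, Finsupp.single (Sum.inl t : Fin e ⊕ Fin e) (c t)) = Finsupp.sumElim c 0 := by
  classical
  ext v
  rw [Finsupp.finset_sum_apply]
  cases v with
  | inl u =>
    simp only [Finsupp.single_apply, Sum.inl.injEq]
    rw [Finset.sum_ite_eq' Finset.univ u (fun t => c t)]
    simp
  | inr u =>
    simp [Finsupp.single_apply]

lemma sum_single_inr (c : Fin e →₀ ℕ) :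
    (∑ t, Finsupp.single (Sum.inr t : Fin e ⊕ Fin e) (c t)) = Finsupp.sumElim 0 c := by
  classical
  ext v
  rw [Finsupp.finset_sum_apply]
  cases v with
  | inl u =>
    simp [Finsupp.single_apply]
  | inr u =>
    simp only [Finsupp.single_apply, Sum.inr.injEq]
    rw [Finset.sum_ite_eq' Finset.univ u (fun t => c t)]
    simp

end SumElim

section TrEval

variable (S : Type*) [CommRing S] (e N : ℕ)

lemma Tr_eval (χ : S →+* Bq S e N) (ψ : S → MvPowerSeries (Fin e ⊕ Fin e) S)
    (hχ : ∀ s, χ s = Tr S e N (ψ s))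
    (β : Fin e → MvPowerSeries (Fin e ⊕ Fin e) S)
    (hβ : ∀ d : Fin e →₀ ℕ, N + 1 ≤ tdeg d → (∏ t, (Tr S e N (β t)) ^ d t) = 0)
    (g : MvPowerSeries (Fin e) S) :
    PSEval N χ (fun t => Tr S e N (β t)) hβ g
      = Tr S e N (∑ l ∈ Finset.Iic (cbound (N + 1) : Fin e →₀ ℕ),
          ψ (MvPowerSeries.coeff l g) * ∏ t, β t ^ l t) := by
  classical
  rw [PSEval_apply, MvPolynomial.eval₂_eq', map_sum]
  have hterm : ∀ l ∈ Finset.Iic (cbound (N + 1) : Fin e →₀ ℕ),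
      Tr S e N (ψ (MvPowerSeries.coeff l g) * ∏ t, β t ^ l t)
        = χ (MvPowerSeries.coeff l g) * ∏ t, Tr S e N (β t) ^ l t := by
    intro l _
    rw [map_mul, map_prod, hχ]
    simp only [map_pow]
  rw [Finset.sum_congr rfl hterm]
  have hsub : (truncFun (cbound (N + 1) : Fin e →₀ ℕ) g).support
      ⊆ Finset.Iic (cbound (N + 1)) := by
    intro d hd
    rw [MvPolynomial.mem_support_iff, coeff_truncFun] at hd
    rw [Finset.mem_Iic]
    by_contra hc
    rw [if_neg hc] at hd
    exact hd rfl
  rw [Finset.sum_subset hsub (fun d _ hnd => by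
    rw [MvPolynomial.notMem_support_iff] at hnd
    rw [hnd, map_zero, zero_mul])]
  refine Finset.sum_congr rfl fun d hd => ?_
  rw [coeff_truncFun, if_pos (Finset.mem_Iic.mp hd)]

end TrEval

section Coeffs

variable {k S : Type*} [CommRing k] [CommRing S] [Algebra k S] {e : ℕ} (N : ℕ)

/-- placeholder FormalGroupLaw-free versions: take a family F directly. -/
def YSer (D' : S → MvPowerSeries (Fin e) S) (s : S) : MvPowerSeries (Fin e ⊕ Fin e) S :=
  ∑ b ∈ Finset.Iic (cbound (N + 1) : Fin e →₀ ℕ),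
    MvPowerSeries.C (MvPowerSeries.coeff b (D' s))
      * ∏ t, (MvPowerSeries.X (Sum.inr t) : MvPowerSeries (Fin e ⊕ Fin e) S) ^ b t

def HSer (D' : S → MvPowerSeries (Fin e) S) (x : S) : MvPowerSeries (Fin e ⊕ Fin e) S :=
  ∑ a ∈ Finset.Iic (cbound (N + 1) : Fin e →₀ ℕ),
    YSer N D' (MvPowerSeries.coeff a (D' x))
      * ∏ t, (MvPowerSeries.X (Sum.inl t) : MvPowerSeries (Fin e ⊕ Fin e) S) ^ a t

def GSer (F : Fin e → MvPowerSeries (Fin e ⊕ Fin e) k) (D' : S → MvPowerSeries (Fin e) S)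
    (x : S) : MvPowerSeries (Fin e ⊕ Fin e) S :=
  ∑ l ∈ Finset.Iic (cbound (N + 1) : Fin e →₀ ℕ),
    MvPowerSeries.C (MvPowerSeries.coeff l (D' x))
      * ∏ t, (MvPowerSeries.map (algebraMap k S) (F t)) ^ l t

lemma coeff_YSer (D' : S → MvPowerSeries (Fin e) S) (s : S) (c b : Fin e →₀ ℕ)
    (hb : b ≤ cbound (N + 1)) :
    MvPowerSeries.coeff (Finsupp.sumElim c b) (YSer N D' s)
      = if c = 0 then MvPowerSeries.coeff b (D' s) else 0 := by
  classical
  rw [YSer, map_sum]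
  have hterm : ∀ b' ∈ Finset.Iic (cbound (N + 1) : Fin e →₀ ℕ),
      MvPowerSeries.coeff (Finsupp.sumElim c b)
          (MvPowerSeries.C (MvPowerSeries.coeff b' (D' s))
            * ∏ t, (MvPowerSeries.X (Sum.inr t) : MvPowerSeries (Fin e ⊕ Fin e) S) ^ b' t)
        = if c = 0 ∧ b' = b then MvPowerSeries.coeff b' (D' s) else 0 := by
    intro b' _
    rw [prod_X_pow, sum_single_inr, ← MvPowerSeries.monomial_zero_eq_C_apply,
      MvPowerSeries.monomial_mul_monomial, zero_add, mul_one, MvPowerSeries.coeff_monomial]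
    refine if_congr ?_ rfl rfl
    rw [sumElim_eq_iff]
    constructor
    · rintro ⟨h1, h2⟩; exact ⟨h1, h2.symm⟩
    · rintro ⟨h1, h2⟩; exact ⟨h1, h2.symm⟩
  rw [Finset.sum_congr rfl hterm]
  by_cases hc : c = 0
  · simp only [hc, true_and]
    rw [Finset.sum_ite_eq' (Finset.Iic (cbound (N + 1)))
      b (fun b' => MvPowerSeries.coeff b' (D' s))]
    simp [Finset.mem_Iic.mpr hb]
  · simp [hc]

lemma coeff_HSer (D' : S → MvPowerSeries (Fin e) S) (x : S) (a b : Fin e →₀ ℕ)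
    (ha : a ≤ cbound (N + 1)) (hb : b ≤ cbound (N + 1)) :
    MvPowerSeries.coeff (Finsupp.sumElim a b) (HSer N D' x)
      = MvPowerSeries.coeff b (D' (MvPowerSeries.coeff a (D' x))) := by
  classical
  rw [HSer, map_sum]
  have hterm : ∀ a' ∈ Finset.Iic (cbound (N + 1) : Fin e →₀ ℕ),
      MvPowerSeries.coeff (Finsupp.sumElim a b)
          (YSer N D' (MvPowerSeries.coeff a' (D' x))
            * ∏ t, (MvPowerSeries.X (Sum.inl t) : MvPowerSeries (Fin e ⊕ Fin e) S) ^ a' t)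
        = if a' ≤ a then
            (if a - a' = 0 then
              MvPowerSeries.coeff b (D' (MvPowerSeries.coeff a' (D' x))) else 0)
          else 0 := by
    intro a' _
    rw [prod_X_pow, sum_single_inl, MvPowerSeries.coeff_mul_monomial]
    have hcond : (Finsupp.sumElim a' (0 : Fin e →₀ ℕ) ≤ Finsupp.sumElim a b) ↔ a' ≤ a := by
      rw [sumElim_le_sumElim_iff]
      exact and_iff_left zero_le
    rw [if_congr hcond rfl rfl]
    by_cases h : a' ≤ a
    · rw [if_pos h, if_pos h, sumElim_sub, mul_one, coeff_YSer N D' _ _ b hb]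
    · rw [if_neg h, if_neg h]
  rw [Finset.sum_congr rfl hterm]
  rw [Finset.sum_eq_single a]
  · rw [if_pos le_rfl, tsub_self, if_pos rfl]
  · intro a' _ hne
    by_cases h : a' ≤ a
    · rw [if_pos h]
      have : ¬ (a - a' = 0) := by
        rw [tsub_eq_zero_iff_le]
        intro hle
        exact hne (le_antisymm h hle)
      rw [if_neg this]
    · rw [if_neg h]
  · intro hnotmem
    exact absurd (Finset.mem_Iic.mpr ha) hnotmem

lemma coeff_GSer (F : Fin e → MvPowerSeries (Fin e ⊕ Fin e) k)
    (hF0 : ∀ t, MvPowerSeries.constantCoeff (F t) = 0)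
    (D' : S → MvPowerSeries (Fin e) S) (x : S) (a b : Fin e →₀ ℕ)
    (hab : tdeg a + tdeg b ≤ N) :
    MvPowerSeries.coeff (Finsupp.sumElim a b) (GSer N F D' x)
      = ∑ l ∈ Finset.Iic (cbound (tdeg a + tdeg b) : Fin e →₀ ℕ),
          fglC F a b l • MvPowerSeries.coeff l (D' x) := by
  classical
  rw [GSer, map_sum]
  have hterm : ∀ l ∈ Finset.Iic (cbound (N + 1) : Fin e →₀ ℕ),
      MvPowerSeries.coeff (Finsupp.sumElim a b)
          (MvPowerSeries.C (MvPowerSeries.coeff l (D' x))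
            * ∏ t, (MvPowerSeries.map (algebraMap k S) (F t)) ^ l t)
        = fglC F a b l • MvPowerSeries.coeff l (D' x) := by
    intro l _
    rw [MvPowerSeries.coeff_C_mul]
    have hmap : (∏ t, (MvPowerSeries.map (algebraMap k S) (F t)) ^ l t)
        = MvPowerSeries.map (algebraMap k S) (∏ t, F t ^ l t) := by
      rw [map_prod]
      refine Finset.prod_congr rfl fun t _ => ?_
      rw [map_pow]
    rw [hmap, MvPowerSeries.coeff_map]
    rw [Algebra.smul_def, mul_comm]
    rfl
  rw [Finset.sum_congr rfl hterm]
  refine (Finset.sum_subset ?_ ?_).symm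
  · refine Finset.Iic_subset_Iic.mpr (Finsupp.le_def.mpr fun t => ?_)
    simp only [cbound_apply]
    omega
  · intro l _ hnl
    have hlt : tdeg a + tdeg b < tdeg l :=
      lt_tdeg_of_not_le_cbound (fun hle => hnl (Finset.mem_Iic.mpr hle))
    have hvan : MvPowerSeries.coeff (Finsupp.sumElim a b) (∏ t, F t ^ l t) = 0 :=
      coeff_prod_vanish F hF0 l (by rw [tdeg_sumElim]; omega)
    rw [show fglC F a b l = 0 from hvan, zero_smul]

end Coeffs

end FDerAux

universe u

open FDerAux

/-- If `R → S` is formally étale and `D` is an `F`-derivation on `R`, then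
the unique `e`-dimensional HS-derivation on `S` extending `D` is again an `F`-derivation. -/
theorem fder_extension_of_formallyEtale
    (p : ℕ) [Fact p.Prime] (e : ℕ) (he : 0 < e)
    (k : Type u) [Field k] [CharP k p] [ExpChar k p] [PerfectRing k p]
    (R S : Type u) [CommRing R] [CommRing S] [Algebra k R] [Algebra k S]
    [Algebra R S] [IsScalarTower k R S] [Algebra.FormallyEtale R S]
    (W : FormalGroupLaw k e)
    (D : HSDer k R e) (hD : IsFDer W D) :
    ∀ D' : HSDer k S e,
      (∀ r : R, D'.toFun (algebraMap R S r)
        = MvPowerSeries.map (algebraMap R S) (D.toFun r)) →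
      IsFDer W D' := by
  classical
  intro D' hext i j x
  set N : ℕ := mdeg i + mdeg j with hNdef
  -- the formal group law has zero constant terms
  have hF0 : ∀ t, MvPowerSeries.constantCoeff (W.F t) = 0 := by
    intro t
    have h := W.unit_right t 0
    rw [sumElim_zero_zero] at h
    rw [MvPowerSeries.coeff_zero_eq_constantCoeff] at h
    rwa [if_neg (by
      intro hcon
      have := congrArg (fun f => f t) hcon
      simp at this)] at h
  -- the function version of D'
  set D'f : S → MvPowerSeries (Fin e) S := fun s => D'.toFun s with hD'f
  -- constant-term-killing families give vanishing high products in the quotient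
  have hker : ∀ (β : Fin e → MvPowerSeries (Fin e ⊕ Fin e) S),
      (∀ t, MvPowerSeries.constantCoeff (β t) = 0) →
      ∀ d : Fin e →₀ ℕ, N + 1 ≤ tdeg d → (∏ t, (Tr S e N (β t)) ^ d t) = 0 := by
    intro β hβ d hd
    refine prod_pow_eq_zero_of_ker S e N _ (fun t => ?_) d hd
    rw [cB_Tr, hβ]
  have hti : tdeg i = mdeg i := rfl
  have htj : tdeg j = mdeg j := rfl
  -- building blocks
  set cstB : S →+* Bq S e N := (Tr S e N).comp (MvPowerSeries.C) with hcstB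
  have hcst : ∀ s, cstB s = Tr S e N (MvPowerSeries.C s) := fun s => rfl
  have hbY : ∀ d : Fin e →₀ ℕ, N + 1 ≤ tdeg d →
      (∏ t, (Tr S e N (MvPowerSeries.X (Sum.inr t))) ^ d t) = 0 :=
    hker _ (fun t => MvPowerSeries.constantCoeff_X _)
  have hbXl : ∀ d : Fin e →₀ ℕ, N + 1 ≤ tdeg d →
      (∏ t, (Tr S e N (MvPowerSeries.X (Sum.inl t))) ^ d t) = 0 :=
    hker _ (fun t => MvPowerSeries.constantCoeff_X _)
  have hbF : ∀ d : Fin e →₀ ℕ, N + 1 ≤ tdeg d →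
      (∏ t, (Tr S e N
        (MvPowerSeries.map (algebraMap k S) (W.F t))) ^ d t) = 0 := by
    refine hker _ (fun t => ?_)
    rw [← MvPowerSeries.coeff_zero_eq_constantCoeff, MvPowerSeries.coeff_map,
      MvPowerSeries.coeff_zero_eq_constantCoeff, hF0, map_zero]
  -- the ring homomorphisms
  set stepY : S →+* Bq S e N :=
    (PSEval N cstB (fun t => Tr S e N (MvPowerSeries.X (Sum.inr t))) hbY).comp
      (D'.toFun : S →ₐ[k] MvPowerSeries (Fin e) S).toRingHom with hstepYdef
  have hstepY : ∀ s, stepY s = Tr S e N (YSer N D'f s) := by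
    intro s
    exact Tr_eval S e N cstB (MvPowerSeries.C) hcst
      (fun t => MvPowerSeries.X (Sum.inr t)) hbY (D'.toFun s)
  set Phi1 : S →+* Bq S e N :=
    (PSEval N stepY (fun t => Tr S e N (MvPowerSeries.X (Sum.inl t))) hbXl).comp
      (D'.toFun : S →ₐ[k] MvPowerSeries (Fin e) S).toRingHom with hPhi1def
  have hPhi1 : ∀ s, Phi1 s = Tr S e N (HSer N D'f s) := by
    intro s
    exact Tr_eval S e N stepY (YSer N D'f) hstepY
      (fun t => MvPowerSeries.X (Sum.inl t)) hbXl (D'.toFun s)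
  set Phi2 : S →+* Bq S e N :=
    (PSEval N cstB
      (fun t => Tr S e N (MvPowerSeries.map (algebraMap k S) (W.F t))) hbF).comp
      (D'.toFun : S →ₐ[k] MvPowerSeries (Fin e) S).toRingHom with hPhi2def
  have hPhi2 : ∀ s, Phi2 s = Tr S e N (GSer N W.F D'f s) := by
    intro s
    exact Tr_eval S e N cstB (MvPowerSeries.C) hcst
      (fun t => MvPowerSeries.map (algebraMap k S) (W.F t)) hbF (D'.toFun s)
  -- D' extends D on components
  have hcmp : ∀ (l : Fin e →₀ ℕ) (r : R),
      D'.cmp l (algebraMap R S r) = algebraMap R S (D.cmp l r) := by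
    intro l r
    show MvPowerSeries.coeff l (D'.toFun (algebraMap R S r)) = _
    rw [hext r, MvPowerSeries.coeff_map]
    rfl
  -- scalar compatibility
  have hsmul : ∀ (c : k) (y : R), algebraMap R S (c • y) = c • algebraMap R S y := by
    intro c y
    rw [Algebra.smul_def, Algebra.smul_def, map_mul, ← IsScalarTower.algebraMap_apply]
  -- agreement on the image of R
  have hRagree : ∀ r : R, Phi1 (algebraMap R S r) = Phi2 (algebraMap R S r) := by
    intro r
    rw [hPhi1, hPhi2]
    apply Tr_congr
    intro d hd
    set a : Fin e →₀ ℕ := Finsupp.equivFunOnFinite.symm fun t => d (Sum.inl t) with hadef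
    set b : Fin e →₀ ℕ := Finsupp.equivFunOnFinite.symm fun t => d (Sum.inr t) with hbdef
    have hd' : d = Finsupp.sumElim a b := (sumElim_decomp d).symm
    have htd : tdeg a + tdeg b ≤ N := by
      have := tdeg_sumElim a b
      rw [← hd'] at this
      omega
    have ha : a ≤ cbound (N + 1) := le_cbound (by omega)
    have hb : b ≤ cbound (N + 1) := le_cbound (by omega)
    rw [hd', coeff_HSer N D'f _ a b ha hb, coeff_GSer N W.F hF0 D'f _ a b htd]
    show D'.cmp b (D'.cmp a (algebraMap R S r)) = _
    rw [hcmp a r, hcmp b (D.cmp a r)]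
    have hDab := hD a b r
    rw [hDab, map_sum]
    refine Finset.sum_congr rfl fun l _ => ?_
    rw [hsmul]
    congr 1
    exact (hcmp l r).symm
  -- apply formal unramifiedness
  letI : Algebra R (Bq S e N) := (Phi1.comp (algebraMap R S)).toAlgebra
  let Phi1a : S →ₐ[R] Bq S e N :=
    { toRingHom := Phi1, commutes' := fun r => rfl }
  let Phi2a : S →ₐ[R] Bq S e N :=
    { toRingHom := Phi2, commutes' := fun r => (hRagree r).symm }
  have hcc : ∀ s : S, MvPowerSeries.constantCoeff (D'.toFun s) = s :=
    D'.constantCoeff_toFun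
  have hzero_le : (0 : Fin e →₀ ℕ) ≤ cbound (N + 1) := zero_le
  have hcoeffH0 : ∀ s : S, MvPowerSeries.coeff (0 : (Fin e ⊕ Fin e) →₀ ℕ)
      (HSer N D'f s) = s := by
    intro s
    rw [← sumElim_zero_zero, coeff_HSer N D'f s 0 0 hzero_le hzero_le]
    show MvPowerSeries.coeff 0 (D'.toFun (MvPowerSeries.coeff 0 (D'.toFun s))) = s
    rw [MvPowerSeries.coeff_zero_eq_constantCoeff_apply, hcc,
      MvPowerSeries.coeff_zero_eq_constantCoeff_apply, hcc]
  have hcoeffG0 : ∀ s : S, MvPowerSeries.coeff (0 : (Fin e ⊕ Fin e) →₀ ℕ)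
      (GSer N W.F D'f s) = s := by
    intro s
    rw [← sumElim_zero_zero, coeff_GSer N W.F hF0 D'f s 0 0 (by simp [tdeg])]
    have hcb0 : (cbound (tdeg (0 : Fin e →₀ ℕ) + tdeg (0 : Fin e →₀ ℕ)) : Fin e →₀ ℕ)
        = 0 := by
      ext t
      simp [cbound_apply, tdeg]
    rw [hcb0]
    rw [Finset.sum_eq_single (0 : Fin e →₀ ℕ)]
    · have h1 : fglC W.F (0 : Fin e →₀ ℕ) 0 0 = 1 := by
        show MvPowerSeries.coeff (Finsupp.sumElim (0 : Fin e →₀ ℕ) 0)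
          (∏ t, W.F t ^ ((0 : Fin e →₀ ℕ) t)) = 1
        rw [sumElim_zero_zero]
        have : (∏ t, W.F t ^ ((0 : Fin e →₀ ℕ) t)) = 1 := by
          refine Finset.prod_eq_one fun t _ => ?_
          simp
        rw [this, MvPowerSeries.coeff_zero_eq_constantCoeff, map_one]
      rw [h1, one_smul]
      show MvPowerSeries.coeff 0 (D'.toFun s) = s
      rw [MvPowerSeries.coeff_zero_eq_constantCoeff_apply, hcc]
    · intro l hl hne
      rw [Finset.mem_Iic] at hl
      exact absurd (le_antisymm hl zero_le) hne
    · intro hmem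
      exact absurd (Finset.mem_Iic.mpr le_rfl) hmem
  have hEq : Phi1a = Phi2a := by
    apply Algebra.FormallyUnramified.ext' (R := R) (cB S e N) (ker_cB_nilpotent S e N)
    intro s
    show cB S e N (Phi1 s) = cB S e N (Phi2 s)
    rw [hPhi1, hPhi2, cB_Tr, cB_Tr, ← MvPowerSeries.coeff_zero_eq_constantCoeff_apply,
      ← MvPowerSeries.coeff_zero_eq_constantCoeff_apply, hcoeffH0, hcoeffG0]
  have hxx : Phi1 x = Phi2 x := by
    have := DFunLike.congr_fun hEq x
    exact this
  rw [hPhi1, hPhi2] at hxx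
  have hkey := Tr_coeff_eq S e N hxx
    (d := Finsupp.sumElim i j) (by rw [tdeg_sumElim]; omega)
  have hi : i ≤ cbound (N + 1) := le_cbound (by omega)
  have hj : j ≤ cbound (N + 1) := le_cbound (by omega)
  rw [coeff_HSer N D'f x i j hi hj, coeff_GSer N W.F hF0 D'f x i j (by omega)] at hkey
  exact hkey
end
end

section
/- Let F be an e-dimensional formal group law over k, let R = k⟦X_1,…,X_e⟧, and let D^F : R → k⟦X_1,…,X_e,Y_1,…,Y_e⟧ be the canonical F-derivation, sending f to the substitution f(F_1,…,F_e). Then (R,D^F) is strict: for f ∈ R, the coefficient of Y_t in the Y-expansion of f(F(X,Y)) (an element of k⟦X_1,…,X_e⟧) vanishes for every t = 1,…,e if and only if f is a p-th power in R. -/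
open scoped TensorProduct

noncomputable section

/-- The coefficient at the monomial with multi-index `q` (over `Fin e ⊕ Fin e`: the first
block are the `X`-variables, the second block the `Y`-variables) of the substitution
`f(F(X,Y)) ∈ k⟦X₁,…,X_e,Y₁,…,Y_e⟧` of the components of a formal group law `F` into
`f ∈ k⟦X₁,…,X_e⟧`.  The displayed sum is finite and equals the full (a priori infinite)
sum `∑_d (coeff d f) · coeff q (F₁^{d 1} ⋯ F_e^{d e})`, since every term with
`|d| > |q|` vanishes (each `F_t` having zero constant term). -/
def substCoeff {k : Type*} [CommRing k] {e : ℕ} (F : Fin e → MvPowerSeries (Fin e ⊕ Fin e) k)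
    (f : MvPowerSeries (Fin e) k) (q : Fin e ⊕ Fin e →₀ ℕ) : k :=
  ∑ d ∈ Finset.Iic (Finsupp.equivFunOnFinite.symm fun _ => ∑ s, q s),
    MvPowerSeries.coeff d f * MvPowerSeries.coeff q (∏ t, F t ^ d t)


set_option linter.unusedSectionVars false

section SliceMachinery
open MvPowerSeries Finsupp
variable {k : Type*} [CommRing k] {e : ℕ}

def sl (j : Fin e →₀ ℕ) (g : MvPowerSeries (Fin e ⊕ Fin e) k) : MvPowerSeries (Fin e) k :=
  fun n => MvPowerSeries.coeff (n.sumElim j) g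

lemma coeff_sl (j n : Fin e →₀ ℕ) (g : MvPowerSeries (Fin e ⊕ Fin e) k) :
    MvPowerSeries.coeff n (sl j g) = MvPowerSeries.coeff (n.sumElim j) g := rfl

lemma sumElim_add (a c : Fin e →₀ ℕ) (b d : Fin e →₀ ℕ) :
    (Finsupp.sumElim a b) + (Finsupp.sumElim c d) = Finsupp.sumElim (a + c) (b + d) := by
  ext x
  cases x <;> simp

lemma E_sumElim (n j : Fin e →₀ ℕ) :
    (Finsupp.sumFinsuppAddEquivProdFinsupp (M := ℕ) (Finsupp.sumElim n j)) = (n, j) :=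
  Finsupp.sumFinsuppAddEquivProdFinsupp.apply_symm_apply (n, j)

lemma sumElim_E (q : Fin e ⊕ Fin e →₀ ℕ) :
    Finsupp.sumElim (Finsupp.sumFinsuppAddEquivProdFinsupp (M := ℕ) q).1
      (Finsupp.sumFinsuppAddEquivProdFinsupp (M := ℕ) q).2 = q :=
  Finsupp.sumFinsuppAddEquivProdFinsupp.symm_apply_apply q

lemma coeff_sumElim_mul (n j : Fin e →₀ ℕ) (A B : MvPowerSeries (Fin e ⊕ Fin e) k) :
    MvPowerSeries.coeff (n.sumElim j) (A * B)
      = ∑ x ∈ Finset.HasAntidiagonal.antidiagonal n ×ˢ Finset.HasAntidiagonal.antidiagonal j,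
          MvPowerSeries.coeff (Finsupp.sumElim x.1.1 x.2.1) A *
            MvPowerSeries.coeff (Finsupp.sumElim x.1.2 x.2.2) B := by
  classical
  rw [MvPowerSeries.coeff_mul]
  refine Finset.sum_nbij' (i := fun q => (((Finsupp.sumFinsuppAddEquivProdFinsupp q.1).1, (Finsupp.sumFinsuppAddEquivProdFinsupp q.2).1), ((Finsupp.sumFinsuppAddEquivProdFinsupp q.1).2, (Finsupp.sumFinsuppAddEquivProdFinsupp q.2).2)))
    (j := fun x => (Finsupp.sumElim x.1.1 x.2.1, Finsupp.sumElim x.1.2 x.2.2))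
    ?_ ?_ ?_ ?_ ?_
  · rintro ⟨q1, q2⟩ hq
    rw [Finset.HasAntidiagonal.mem_antidiagonal] at hq
    have : Finsupp.sumFinsuppAddEquivProdFinsupp q1 + Finsupp.sumFinsuppAddEquivProdFinsupp q2
        = ((n, j) : (Fin e →₀ ℕ) × (Fin e →₀ ℕ)) := by rw [← map_add, hq, E_sumElim]
    have h1 := congrArg Prod.fst this
    have h2 := congrArg Prod.snd this
    simp only [Prod.fst_add, Prod.snd_add] at h1 h2
    simp only [Finset.mem_product, Finset.HasAntidiagonal.mem_antidiagonal]
    exact ⟨h1, h2⟩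
  · rintro ⟨⟨n1, n2⟩, ⟨j1, j2⟩⟩ hx
    simp only [Finset.mem_product, Finset.HasAntidiagonal.mem_antidiagonal] at hx
    rw [Finset.HasAntidiagonal.mem_antidiagonal, sumElim_add, hx.1, hx.2]
  · rintro ⟨q1, q2⟩ _
    exact Prod.ext (sumElim_E q1) (sumElim_E q2)
  · rintro ⟨⟨n1, n2⟩, ⟨j1, j2⟩⟩ _
    have h1 := E_sumElim n1 j1
    have h2 := E_sumElim n2 j2
    rw [Prod.ext_iff] at h1 h2
    exact Prod.ext (Prod.ext h1.1 h2.1) (Prod.ext h1.2 h2.2)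
  · rintro ⟨q1, q2⟩ _
    rw [sumElim_E, sumElim_E]

lemma sl_one_zero : sl (0 : Fin e →₀ ℕ) (1 : MvPowerSeries (Fin e ⊕ Fin e) k) = 1 := by
  ext n
  rw [coeff_sl, MvPowerSeries.coeff_one, MvPowerSeries.coeff_one]
  congr 1
  simp only [eq_iff_iff]
  constructor
  · intro h
    ext u
    have := DFunLike.congr_fun h (Sum.inl u)
    simpa using this
  · rintro rfl
    ext x; cases x <;> simp

lemma sl_one_single (t : Fin e) :
    sl (Finsupp.single t 1) (1 : MvPowerSeries (Fin e ⊕ Fin e) k) = 0 := by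
  ext n
  rw [coeff_sl, MvPowerSeries.coeff_one]
  rw [if_neg, map_zero]
  intro h
  have := DFunLike.congr_fun h (Sum.inr t)
  simp at this

lemma sl_add (j : Fin e →₀ ℕ) (A B : MvPowerSeries (Fin e ⊕ Fin e) k) :
    sl j (A + B) = sl j A + sl j B := by
  ext n
  simp [coeff_sl]

lemma sl_mul_zero (A B : MvPowerSeries (Fin e ⊕ Fin e) k) :
    sl 0 (A * B) = sl 0 A * sl 0 B := by
  classical
  ext n
  rw [coeff_sl, coeff_sumElim_mul, MvPowerSeries.coeff_mul, Finsupp.antidiagonal_zero,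
    Finset.sum_product, Finset.sum_congr rfl (fun x _ => Finset.sum_singleton _ _)]
  exact Finset.sum_congr rfl fun x _ => rfl

lemma sl_mul_single (t : Fin e) (A B : MvPowerSeries (Fin e ⊕ Fin e) k) :
    sl (Finsupp.single t 1) (A * B)
      = sl 0 A * sl (Finsupp.single t 1) B + sl (Finsupp.single t 1) A * sl 0 B := by
  classical
  have h1 : Finset.HasAntidiagonal.antidiagonal (1 : ℕ) = {(0, 1), (1, 0)} := rfl
  ext n
  rw [coeff_sl, coeff_sumElim_mul, Finsupp.antidiagonal_single, Finset.sum_product,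
    map_add, MvPowerSeries.coeff_mul, MvPowerSeries.coeff_mul, ← Finset.sum_add_distrib]
  refine Finset.sum_congr rfl fun x _ => ?_
  rw [Finset.sum_map, h1]
  rw [Finset.sum_insert (by decide), Finset.sum_singleton]
  simp only [Function.Embedding.coe_prodMap, Function.Embedding.coeFn_mk, Prod.map_apply,
    Finsupp.single_zero]
  rw [coeff_sl, coeff_sl, coeff_sl, coeff_sl]

lemma sl_pow_zero (A : MvPowerSeries (Fin e ⊕ Fin e) k) (m : ℕ) :
    sl 0 (A ^ m) = (sl 0 A) ^ m := by
  induction m with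
  | zero => simpa using sl_one_zero
  | succ m ih => rw [pow_succ, pow_succ, sl_mul_zero, ih]

lemma sl_pow_single (t : Fin e) (A : MvPowerSeries (Fin e ⊕ Fin e) k) (m : ℕ) :
    sl (Finsupp.single t 1) (A ^ (m + 1))
      = (m + 1) • ((sl 0 A) ^ m * sl (Finsupp.single t 1) A) := by
  induction m with
  | zero => simp
  | succ m ih =>
    rw [pow_succ, sl_mul_single, ih, sl_pow_zero, nsmul_eq_mul, nsmul_eq_mul]
    push_cast
    ring

lemma sl_prod_zero {ι : Type*} (s : Finset ι) (A : ι → MvPowerSeries (Fin e ⊕ Fin e) k) :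
    sl 0 (∏ i ∈ s, A i) = ∏ i ∈ s, sl 0 (A i) := by
  classical
  induction s using Finset.induction_on with
  | empty => simpa using sl_one_zero
  | @insert a s ha ih => rw [Finset.prod_insert ha, sl_mul_zero, ih, Finset.prod_insert ha]

lemma sl_prod_single (t : Fin e) {ι : Type*} [DecidableEq ι] (s : Finset ι)
    (A : ι → MvPowerSeries (Fin e ⊕ Fin e) k) :
    sl (Finsupp.single t 1) (∏ i ∈ s, A i)
      = ∑ i ∈ s, sl (Finsupp.single t 1) (A i) * ∏ u ∈ s.erase i, sl 0 (A u) := by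
  induction s using Finset.induction_on with
  | empty => simpa using sl_one_single t
  | @insert a s ha ih =>
    rw [Finset.prod_insert ha, sl_mul_single, ih, sl_prod_zero,
      Finset.sum_insert ha, Finset.erase_insert ha]
    have hs : ∀ i ∈ s, sl (Finsupp.single t 1) (A i) * ∏ u ∈ (insert a s).erase i, sl 0 (A u)
        = sl 0 (A a) * (sl (Finsupp.single t 1) (A i) * ∏ u ∈ s.erase i, sl 0 (A u)) := by
      intro i hi
      rw [Finset.erase_insert_of_ne (ne_of_mem_of_not_mem hi ha).symm,
        Finset.prod_insert (fun h => ha (Finset.mem_of_mem_erase h))]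
      ring
    rw [Finset.sum_congr rfl hs, ← Finset.mul_sum]
    ring

end SliceMachinery

section FrobeniusMachinery
open MvPowerSeries

variable {k : Type*} [Field k] {p : ℕ} [Fact p.Prime] [CharP k p] {σ : Type*}

lemma expand_monomial_smul (d : σ →₀ ℕ) (r : k) :
    MvPolynomial.expand p (MvPolynomial.monomial d r) = MvPolynomial.monomial (p • d) r := by
  have hp0 : p ≠ 0 := (Fact.out : p.Prime).ne_zero
  rw [MvPolynomial.expand_monomial, MvPolynomial.monomial_eq]

lemma mv_expand_char (f : MvPolynomial σ k) :
    MvPolynomial.map (frobenius k p) (MvPolynomial.expand p f) = f ^ p := by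
  induction f using MvPolynomial.induction_on' with
  | monomial d r =>
    rw [expand_monomial_smul, MvPolynomial.map_monomial, MvPolynomial.monomial_pow,
      frobenius_def]
  | add f g hf hg =>
    rw [map_add, map_add, hf, hg, add_pow_char]

variable [DecidableEq σ]

lemma coeff_pow_p (g : MvPowerSeries σ k) (q : σ →₀ ℕ) :
    MvPowerSeries.coeff q (g ^ p) =
      ∑ d ∈ Finset.Iic q, if q = p • d then (MvPowerSeries.coeff d g) ^ p else 0 := by
  classical
  set P : MvPolynomial σ k :=
    ∑ d ∈ Finset.Iic q, MvPolynomial.monomial d (MvPowerSeries.coeff d g) with hPdef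
  have hP : ∀ d ≤ q, MvPolynomial.coeff d P = MvPowerSeries.coeff d g := by
    intro d hd
    rw [hPdef, MvPolynomial.coeff_sum]
    rw [Finset.sum_eq_single d (fun b _ hb => by
      rw [MvPolynomial.coeff_monomial, if_neg hb]) (fun h => absurd (Finset.mem_Iic.2 hd) h)]
    rw [MvPolynomial.coeff_monomial, if_pos rfl]
  have h1 : MvPowerSeries.coeff q (g ^ p)
      = MvPowerSeries.coeff q ((P : MvPowerSeries σ k) ^ p) := by
    rw [MvPowerSeries.coeff_pow, MvPowerSeries.coeff_pow]
    refine Finset.sum_congr rfl fun l hl => Finset.prod_congr rfl fun i hi => ?_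
    rw [Finset.mem_finsuppAntidiag] at hl
    have hle : l i ≤ q := hl.1 ▸ Finset.single_le_sum (f := fun j => l j)
      (fun j _ => zero_le) hi
    rw [MvPolynomial.coeff_coe, hP _ hle]
  have h2 : ((P : MvPowerSeries σ k) ^ p) = ((P ^ p : MvPolynomial σ k) : MvPowerSeries σ k) := by
    rw [MvPolynomial.coe_pow]
  have hE : MvPolynomial.expand p P
      = ∑ d ∈ Finset.Iic q, MvPolynomial.monomial (p • d) (MvPowerSeries.coeff d g) := by
    rw [hPdef, map_sum]
    exact Finset.sum_congr rfl fun d _ => expand_monomial_smul d _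
  rw [h1, h2, MvPolynomial.coeff_coe, ← mv_expand_char, MvPolynomial.coeff_map, hE,
    MvPolynomial.coeff_sum, map_sum]
  refine Finset.sum_congr rfl fun d _ => ?_
  rw [MvPolynomial.coeff_monomial]
  split_ifs with h h' h'
  · rw [frobenius_def]
  · exact absurd h.symm h'
  · exact absurd h'.symm h
  · rw [map_zero]

omit [DecidableEq σ] in
lemma smul_cancel {d d' : σ →₀ ℕ} (h : p • d = p • d') : d = d' := by
  have hp : 0 < p := (Fact.out : p.Prime).pos
  ext i
  have := DFunLike.congr_fun h i
  simp only [Finsupp.smul_apply, smul_eq_mul] at this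
  exact Nat.eq_of_mul_eq_mul_left hp this

lemma coeff_pow_p_smul (g : MvPowerSeries σ k) (d : σ →₀ ℕ) :
    MvPowerSeries.coeff (p • d) (g ^ p) = (MvPowerSeries.coeff d g) ^ p := by
  rw [coeff_pow_p]
  rw [Finset.sum_eq_single d (fun b _ hb => by
      rw [if_neg (fun hc => hb (smul_cancel hc.symm))])
    (fun h => absurd (Finset.mem_Iic.2 (Finsupp.le_def.2 fun i => by
      simpa using Nat.le_mul_of_pos_left (d i) (Fact.out : p.Prime).pos)) h)]
  rw [if_pos rfl]

lemma coeff_pow_p_zero (g : MvPowerSeries σ k) (q : σ →₀ ℕ) (h : ¬ ∃ d, q = p • d) :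
    MvPowerSeries.coeff q (g ^ p) = 0 := by
  rw [coeff_pow_p]
  exact Finset.sum_eq_zero fun d _ => by
    rw [if_neg (fun hc => h ⟨d, hc⟩)]

end FrobeniusMachinery

section MainMachinery
open MvPowerSeries Finsupp
section Main
variable {k : Type*} [CommRing k] {e : ℕ} (W : FormalGroupLaw k e)

/-- the coefficient of `Y_t` in `F_s`, as a power series in `X`. -/
def Hc (s t : Fin e) : MvPowerSeries (Fin e) k := sl (Finsupp.single t 1) (W.F s)

/-- formal partial derivative -/
def Dp (s : Fin e) (f : MvPowerSeries (Fin e) k) : MvPowerSeries (Fin e) k :=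
  fun m => ((m s + 1 : ℕ) : k) * MvPowerSeries.coeff (m + Finsupp.single s 1) f

lemma coeff_Dp (s : Fin e) (f : MvPowerSeries (Fin e) k) (m : Fin e →₀ ℕ) :
    MvPowerSeries.coeff m (Dp s f)
      = ((m s + 1 : ℕ) : k) * MvPowerSeries.coeff (m + Finsupp.single s 1) f := rfl

lemma sl0_F (s : Fin e) : sl 0 (W.F s) = MvPowerSeries.X s := by
  ext n
  rw [coeff_sl, W.unit_right, MvPowerSeries.X, MvPowerSeries.coeff_monomial]

lemma mdeg_single (t : Fin e) : mdeg (Finsupp.single t (1:ℕ)) = 1 := by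
  simp [mdeg, Finsupp.single_apply]

lemma sum_sumElim (n j : Fin e →₀ ℕ) :
    (∑ s : Fin e ⊕ Fin e, (Finsupp.sumElim n j) s) = mdeg n + mdeg j := by
  rw [Fintype.sum_sum_type]
  simp [mdeg]

lemma sum_single_apply (s : Finset (Fin e)) (d : Fin e →₀ ℕ) (v : Fin e) :
    (∑ u ∈ s, Finsupp.single u (d u)) v = if v ∈ s then d v else 0 := by
  rw [Finset.sum_apply']
  simp only [Finsupp.single_apply]
  rw [Finset.sum_ite_eq' s v (fun u => d u)]

lemma prod_X_pow (s : Finset (Fin e)) (d : Fin e →₀ ℕ) :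
    (∏ u ∈ s, (MvPowerSeries.X u : MvPowerSeries (Fin e) k) ^ (d u))
      = MvPowerSeries.monomial (∑ u ∈ s, Finsupp.single u (d u)) 1 := by
  classical
  induction s using Finset.induction_on with
  | empty => simp [MvPowerSeries.monomial_zero_one]
  | @insert a s ha ih =>
    rw [Finset.prod_insert ha, ih, MvPowerSeries.X_pow_eq, MvPowerSeries.monomial_mul_monomial,
      Finset.sum_insert ha, one_mul]

lemma sle_prod_pow (t : Fin e) (d : Fin e →₀ ℕ) :
    sl (Finsupp.single t 1) (∏ s, W.F s ^ d s)
      = ∑ s, (d s) • (MvPowerSeries.monomial (d - Finsupp.single s 1) 1 * Hc W s t) := by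
  rw [sl_prod_single]
  refine Finset.sum_congr rfl fun s _ => ?_
  have hX : ∀ u, sl 0 (W.F u ^ d u) = (MvPowerSeries.X u : MvPowerSeries (Fin e) k) ^ d u :=
    fun u => by rw [sl_pow_zero, sl0_F]
  rcases Nat.eq_zero_or_pos (d s) with h0 | hpos
  · rw [h0, pow_zero, sl_one_single, zero_mul, zero_smul]
  · obtain ⟨m, hm⟩ : ∃ m, d s = m + 1 := ⟨d s - 1, (Nat.succ_pred_eq_of_pos hpos).symm⟩
    rw [hm, sl_pow_single, sl0_F, Finset.prod_congr rfl (fun u _ => hX u), prod_X_pow,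
      MvPowerSeries.X_pow_eq, smul_mul_assoc]
    have key : Finsupp.single s m + ∑ u ∈ Finset.univ.erase s, Finsupp.single u (d u)
        = d - Finsupp.single s 1 := by
      ext v
      rw [Finsupp.add_apply, sum_single_apply, Finsupp.tsub_apply, Finsupp.single_apply,
        Finsupp.single_apply]
      rcases eq_or_ne s v with rfl | hv
      · simp [hm]
      · simp [hv, Ne.symm hv]
    have h2 : (MvPowerSeries.monomial (Finsupp.single s m)) 1 * sl (Finsupp.single t 1) (W.F s) *
        (MvPowerSeries.monomial (∑ u ∈ Finset.univ.erase s, Finsupp.single u (d u))) 1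
        = ((MvPowerSeries.monomial (Finsupp.single s m)) 1 *
          (MvPowerSeries.monomial (∑ u ∈ Finset.univ.erase s, Finsupp.single u (d u))) 1) *
          sl (Finsupp.single t 1) (W.F s) := by ring
    rw [h2, MvPowerSeries.monomial_mul_monomial, one_mul, key]
    rfl


lemma claimA_s (t s : Fin e) (n : Fin e →₀ ℕ) (f : MvPowerSeries (Fin e) k) :
    ∑ d ∈ Finset.Iic (Finsupp.equivFunOnFinite.symm fun _ => mdeg n + 1),
        MvPowerSeries.coeff d f *
          ((d s : k) * MvPowerSeries.coeff n
            (MvPowerSeries.monomial (d - Finsupp.single s 1) 1 * Hc W s t))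
      = MvPowerSeries.coeff n (Dp s f * Hc W s t) := by
  classical
  set N : Fin e →₀ ℕ := Finsupp.equivFunOnFinite.symm fun _ => mdeg n + 1 with hN
  set T : (Fin e →₀ ℕ) → k := fun d =>
    MvPowerSeries.coeff d f *
      ((d s : k) * MvPowerSeries.coeff n
        (MvPowerSeries.monomial (d - Finsupp.single s 1) 1 * Hc W s t)) with hT
  have hsub : (Finset.Iic n).image (· + Finsupp.single s 1) ⊆ Finset.Iic N := by
    intro d hd
    obtain ⟨m, hm, rfl⟩ := Finset.mem_image.1 hd
    rw [Finset.mem_Iic] at hm ⊢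
    intro v
    have h1 : m v ≤ n v := hm v
    have h2 : n v ≤ mdeg n := Finset.single_le_sum (f := fun u => n u) (fun _ _ => Nat.zero_le _)
      (Finset.mem_univ v)
    have h3 : (Finsupp.single s 1 : Fin e →₀ ℕ) v ≤ 1 := by
      rw [Finsupp.single_apply]; split <;> omega
    have h4 : N v = mdeg n + 1 := rfl
    rw [Finsupp.add_apply, h4]
    omega
  have hvan : ∀ d ∈ Finset.Iic N, d ∉ (Finset.Iic n).image (· + Finsupp.single s 1) → T d = 0 := by
    intro d _ hd
    rcases Nat.eq_zero_or_pos (d s) with h0 | hpos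
    · rw [hT]; simp [h0]
    · have hsle : Finsupp.single s 1 ≤ d := Finsupp.single_le_iff.2 hpos
      have hne : ¬ (d - Finsupp.single s 1 ≤ n) := by
        intro hle
        exact hd (Finset.mem_image.2 ⟨d - Finsupp.single s 1, Finset.mem_Iic.2 hle,
          tsub_add_cancel_of_le hsle⟩)
      rw [hT]
      simp only
      rw [MvPowerSeries.coeff_monomial_mul, if_neg hne, mul_zero, mul_zero]
  rw [← Finset.sum_subset hsub (fun d hd hnd => hvan d hd hnd)]
  rw [Finset.sum_image (fun a _ b _ h => by
    have := congrArg (· - Finsupp.single s 1) h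
    simpa [add_tsub_cancel_right] using this)]
  rw [MvPowerSeries.coeff_mul]
  refine (Finset.sum_nbij' (i := fun x => x.1) (j := fun m => (m, n - m)) ?_ ?_ ?_ ?_ ?_).symm
  · rintro ⟨m, r⟩ hm
    rw [Finset.HasAntidiagonal.mem_antidiagonal] at hm
    exact Finset.mem_Iic.2 (hm ▸ self_le_add_right m r)
  · intro m hm
    rw [Finset.mem_Iic] at hm
    rw [Finset.HasAntidiagonal.mem_antidiagonal, add_tsub_cancel_of_le hm]
  · rintro ⟨m, r⟩ hm
    rw [Finset.HasAntidiagonal.mem_antidiagonal] at hm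
    have : r = n - m := by rw [← hm, add_tsub_cancel_left]
    rw [this]
  · intro m _
    rfl
  · rintro ⟨m, r⟩ hm
    rw [Finset.HasAntidiagonal.mem_antidiagonal] at hm
    have hmn : m ≤ n := hm ▸ self_le_add_right m r
    have hr : r = n - m := by rw [← hm, add_tsub_cancel_left]
    rw [coeff_Dp, hT]
    simp only
    rw [add_tsub_cancel_right, MvPowerSeries.coeff_monomial_mul, if_pos hmn, one_mul,
      Finsupp.add_apply, Finsupp.single_apply, if_pos rfl, hr]
    ring

lemma claimA (t : Fin e) (n : Fin e →₀ ℕ) (f : MvPowerSeries (Fin e) k) :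
    substCoeff W.F f (Finsupp.sumElim n (Finsupp.single t 1))
      = MvPowerSeries.coeff n (∑ s, Dp s f * Hc W s t) := by
  classical
  rw [substCoeff]
  have hq : (∑ s : Fin e ⊕ Fin e, (Finsupp.sumElim n (Finsupp.single t 1)) s) = mdeg n + 1 := by
    rw [sum_sumElim, mdeg_single]
  rw [hq]
  have hc : ∀ d : Fin e →₀ ℕ,
      MvPowerSeries.coeff (Finsupp.sumElim n (Finsupp.single t 1)) (∏ u, W.F u ^ d u)
        = ∑ s, (d s : k) * MvPowerSeries.coeff n
            (MvPowerSeries.monomial (d - Finsupp.single s 1) 1 * Hc W s t) := by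
    intro d
    have := congrArg (MvPowerSeries.coeff n) (sle_prod_pow W t d)
    rw [coeff_sl] at this
    rw [this, map_sum]
    exact Finset.sum_congr rfl fun s _ => by rw [map_nsmul, nsmul_eq_mul]
  rw [Finset.sum_congr rfl (fun d _ => by rw [hc d, Finset.mul_sum]), Finset.sum_comm,
    map_sum]
  exact Finset.sum_congr rfl fun s _ => claimA_s W t s n f


lemma vanish (f : MvPowerSeries (Fin e) k) (hz : ∀ t, ∑ s, Dp s f * Hc W s t = 0) :
    ∀ s, Dp s f = 0 := by
  classical
  set M : Matrix (Fin e) (Fin e) (MvPowerSeries (Fin e) k) := Matrix.of fun s t => Hc W s t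
    with hM
  have hconst : (MvPowerSeries.constantCoeff : MvPowerSeries (Fin e) k →+* k).mapMatrix M = 1 := by
    ext s t
    rw [RingHom.mapMatrix_apply, Matrix.map_apply, Matrix.one_apply]
    rw [hM, Matrix.of_apply, ← MvPowerSeries.coeff_zero_eq_constantCoeff_apply]
    rw [show MvPowerSeries.coeff (0 : Fin e →₀ ℕ) (Hc W s t)
        = MvPowerSeries.coeff (Finsupp.sumElim 0 (Finsupp.single t 1)) (W.F s) from rfl]
    rw [W.unit_left]
    rcases eq_or_ne s t with rfl | hst
    · rw [if_pos rfl, if_pos rfl]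
    · rw [if_neg, if_neg hst]
      intro hc
      exact hst ((Finsupp.single_left_inj one_ne_zero).1 hc).symm
  have hdet : IsUnit M.det := by
    rw [MvPowerSeries.isUnit_iff_constantCoeff, RingHom.map_det, hconst, Matrix.det_one]
    exact isUnit_one
  have hv : Matrix.vecMul (fun s => Dp s f) M = 0 := by
    funext t
    show ∑ s, Dp s f * M s t = 0
    exact hz t
  have h1 : (fun s => Dp s f) = Matrix.vecMul (Matrix.vecMul (fun s => Dp s f) M) M⁻¹ := by
    rw [Matrix.vecMul_vecMul, Matrix.mul_nonsing_inv M hdet, Matrix.vecMul_one]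
  rw [hv, Matrix.zero_vecMul] at h1
  exact fun s => congrFun h1 s

end Main

section CharPart
variable {k : Type*} [Field k] {p : ℕ} [Fact p.Prime] [CharP k p] {e : ℕ}


lemma Dp_pow_p (g : MvPowerSeries (Fin e) k) (s : Fin e) : Dp s (g ^ p) = 0 := by
  ext m
  rw [coeff_Dp, map_zero]
  by_cases h : ∃ d, m + Finsupp.single s 1 = p • d
  · obtain ⟨d, hd⟩ := h
    have hms : m s + 1 = p * d s := by
      have := DFunLike.congr_fun hd s
      simpa [Finsupp.single_apply] using this
    have hz : ((m s + 1 : ℕ) : k) = 0 := by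
      rw [hms]
      exact (CharP.cast_eq_zero_iff k p _).2 ⟨d s, rfl⟩
    rw [hz, zero_mul]
  · rw [coeff_pow_p_zero _ _ h, mul_zero]

lemma Dp_all_zero (f : MvPowerSeries (Fin e) k) (hD : ∀ s, Dp s f = 0) :
    ∀ d : Fin e →₀ ℕ, (∃ s, ¬ (p ∣ d s)) → MvPowerSeries.coeff d f = 0 := by
  intro d hex
  obtain ⟨s, hs⟩ := hex
  have hds : d s ≠ 0 := fun h => hs (h ▸ dvd_zero p)
  have hsle : Finsupp.single s 1 ≤ d := Finsupp.single_le_iff.2 (Nat.pos_of_ne_zero hds)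
  set c : Fin e →₀ ℕ := d - Finsupp.single s 1 with hc
  have hm : c + Finsupp.single s 1 = d := tsub_add_cancel_of_le hsle
  have h0 := congrArg (MvPowerSeries.coeff c) (hD s)
  rw [coeff_Dp, map_zero, hm] at h0
  have hcs : c s + 1 = d s := by
    rw [hc, Finsupp.tsub_apply, Finsupp.single_eq_same]
    omega
  rw [hcs] at h0
  have hcast : ((d s : ℕ) : k) ≠ 0 := fun hzz => hs ((CharP.cast_eq_zero_iff k p _).1 hzz)
  exact (mul_eq_zero.1 h0).resolve_left hcast


end CharPart

end MainMachinery

universe u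

/-- The canonical `F`-derivation `D^F : f ↦ f(F(X,Y))` on
`R = k⟦X₁,…,X_e⟧` is strict: the coefficient of `Y_t` in the `Y`-expansion of `f(F(X,Y))`
vanishes for every `t` iff `f` is a `p`-th power in `R`. -/
theorem canonical_fderivation_strict
    (p : ℕ) [Fact p.Prime] (e : ℕ) (he : 0 < e)
    (k : Type u) [Field k] [CharP k p] [ExpChar k p] [PerfectRing k p]
    (W : FormalGroupLaw k e) (f : MvPowerSeries (Fin e) k) :
    (∀ (t : Fin e) (n : Fin e →₀ ℕ),
        substCoeff W.F f (Finsupp.sumElim n (Finsupp.single t 1)) = 0)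
      ↔ ∃ g : MvPowerSeries (Fin e) k, g ^ p = f := by
  constructor
  · intro h
    have hz : ∀ t, ∑ s, Dp s f * Hc W s t = 0 := by
      intro t
      ext n
      rw [map_zero, ← claimA W t n f]
      exact h t n
    have hD := vanish W f hz
    have hcf := Dp_all_zero (p := p) f hD
    obtain ⟨g, hg⟩ : ∃ g : MvPowerSeries (Fin e) k, ∀ m, MvPowerSeries.coeff m g
        = (frobeniusEquiv k p).symm (MvPowerSeries.coeff (p • m) f) :=
      ⟨fun m => (frobeniusEquiv k p).symm (MvPowerSeries.coeff (p • m) f), fun m => rfl⟩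
    refine ⟨g, ?_⟩
    ext q
    by_cases hq : ∃ d, q = p • d
    · obtain ⟨d, rfl⟩ := hq
      rw [coeff_pow_p_smul, hg]
      exact frobeniusEquiv_symm_pow_p k p _
    · rw [coeff_pow_p_zero _ _ hq]
      symm
      refine hcf q ?_
      by_contra hno
      push_neg at hno
      exact hq ⟨Finsupp.mapRange (· / p) (Nat.zero_div _) q, Finsupp.ext fun v => by
        rw [Finsupp.smul_apply, Finsupp.mapRange_apply, smul_eq_mul,
          Nat.mul_div_cancel' (hno v)]⟩
  · rintro ⟨g, rfl⟩ t n
    rw [claimA]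
    rw [Finset.sum_congr rfl fun s _ => by rw [Dp_pow_p g s, zero_mul]]
    simp
end
end
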